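/- arXiv:2003.06702 — 8 statements merged into one kernel-verified Lean document; each statement's English description precedes it below -/
import Mathlib

section
/- Let ε > 0 and define φ : ℝ → ℝ by φ(t) = 3π/2 for t ≤ 1 and φ(t) = 3π/2 + ε·ln(ln(e + (t−1)⁴)) for t > 1. Then for every t > 1 one has 0 < φ'(t)·t·ln t ≤ 8ε. -/
open Real

theorem phi_deriv_t_log_t_estimate (ε : ℝ) (hε : 0 < ε) (φ : ℝ → ℝ)
    (hφ : ∀ t : ℝ, φ t = if t ≤ 1 then 3 * π / 2
      else 3 * π / 2 + ε * Real.log (Real.log (Real.exp 1 + (t - 1) ^ 4))) :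
    ∀ t : ℝ, 1 < t →
      0 < deriv φ t * t * Real.log t ∧ deriv φ t * t * Real.log t ≤ 8 * ε := by
  intro t ht
  set s : ℝ := t - 1 with hsdef
  have hs : 0 < s := by simp [hsdef]; linarith
  have he : (2:ℝ) ≤ Real.exp 1 := by
    have := Real.add_one_le_exp 1
    linarith
  have hA : (0:ℝ) < Real.exp 1 + s ^ 4 := by positivity
  have hAe : Real.exp 1 ≤ Real.exp 1 + s ^ 4 := by nlinarith [pow_pos hs 4]
  have hL1 : 1 ≤ Real.log (Real.exp 1 + s ^ 4) := by
    calc (1:ℝ) = Real.log (Real.exp 1) := (Real.log_exp 1).symm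
    _ ≤ _ := Real.log_le_log (Real.exp_pos 1) hAe
  have hL0 : Real.log (Real.exp 1 + s ^ 4) ≠ 0 := by linarith
  set A : ℝ := Real.exp 1 + s ^ 4 with hAdef
  set L : ℝ := Real.log A with hLdef
  have hd : HasDerivAt φ (ε * (4 * s ^ 3 / A / L)) t := by
    have h1 : HasDerivAt (fun x : ℝ => Real.exp 1 + (x - 1) ^ 4) (4 * s ^ 3) t := by
      have h0 : HasDerivAt (fun x : ℝ => (x - 1) ^ 4) (4 * s ^ 3) t := by
        have := ((hasDerivAt_id t).sub_const 1).pow 4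
        simpa [hsdef, Pi.pow_def] using this
      simpa using h0.const_add (Real.exp 1)
    have h2 := h1.log (ne_of_gt hA)
    have h3 := h2.log hL0
    have h4 := (h3.const_mul ε).const_add (3 * π / 2)
    have heq : φ =ᶠ[nhds t] fun x => 3 * π / 2 + ε * Real.log (Real.log (Real.exp 1 + (x - 1) ^ 4)) := by
      filter_upwards [eventually_gt_nhds ht] with x hx
      rw [hφ x, if_neg (not_le.mpr hx)]
    exact HasDerivAt.congr_of_eventuallyEq h4 heq
  have hdv : deriv φ t = ε * (4 * s ^ 3 / A / L) := hd.deriv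
  have hlogt : 0 < Real.log t := Real.log_pos ht
  have hL : (0:ℝ) < L := by linarith
  constructor
  · rw [hdv]
    have : 0 < 4 * s ^ 3 / A / L := div_pos (div_pos (by positivity) hA) hL
    positivity
  · rw [hdv]
    have hkey : 4 * s ^ 3 * t * Real.log t ≤ 8 * (A * L) := by
      rcases le_or_gt 2 t with h2t | h2t
      · -- s ≥ 1
        have hs1 : 1 ≤ s := by simp [hsdef]; linarith
        have htA : t ≤ A := by
          have hss : s ≤ s ^ 2 := by nlinarith
          have : s ≤ s ^ 4 := by nlinarith [mul_le_mul hss hss hs.le (by positivity : (0:ℝ) ≤ s ^ 2)]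
          simp only [hAdef]; nlinarith
        have hlt : Real.log t ≤ L := Real.log_le_log (by linarith) htA
        have h1 : 4 * s ^ 3 * t ≤ 8 * A := by
          have : 4 * s ^ 3 * t ≤ 8 * s ^ 4 := by nlinarith
          nlinarith [Real.exp_pos 1]
        nlinarith [mul_le_mul h1 hlt hlogt.le (by positivity : (0:ℝ) ≤ 8 * A)]
      · -- s < 1
        have hs1 : s < 1 := by simp [hsdef]; linarith
        have hlog : Real.log t ≤ s := by
          have := Real.log_le_sub_one_of_pos (by linarith : (0:ℝ) < t)
          linarith [this]
        have hs4 : s ^ 4 < 1 := pow_lt_one₀ hs.le hs1 (by norm_num)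
        have hAL : A ≤ A * L := by nlinarith
        nlinarith [mul_le_mul_of_nonneg_left hlog (by positivity : (0:ℝ) ≤ 4 * s ^ 3 * t)]
    have hALpos : 0 < A * L := mul_pos hA hL
    have : ε * (4 * s ^ 3 / A / L) * t * Real.log t = ε * (4 * s ^ 3 * t * Real.log t) / (A * L) := by
      field_simp
    rw [this, div_le_iff₀ hALpos]
    nlinarith [mul_le_mul_of_nonneg_left hkey hε.le]
end

section
/- Let ε > 0 and define φ : ℝ → ℝ by φ(t) = 3π/2 for t ≤ 1 and φ(t) = 3π/2 + ε·ln(ln(e + (t−1)⁴)) for t > 1. Then for every t > 1 one has |φ''(t)|·t²·ln t ≤ 128ε. -/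
open Real

lemma aux_pos (x : ℝ) : 0 < Real.exp 1 + (x - 1) ^ 4 := by positivity

lemma aux_log_ge (x : ℝ) : 1 ≤ Real.log (Real.exp 1 + (x - 1) ^ 4) := by
  have h := Real.log_le_log (Real.exp_pos 1) (le_add_of_nonneg_right (by positivity : (0:ℝ) ≤ (x-1)^4))
  simpa using h

lemma aux_hasDerivA (x : ℝ) :
    HasDerivAt (fun y : ℝ => Real.exp 1 + (y - 1) ^ 4) (4 * (x - 1) ^ 3) x := by
  have h := (((hasDerivAt_id x).sub_const 1).pow 4).const_add (Real.exp 1)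
  simpa [mul_comm] using h

lemma aux_hasDeriv1 (ε : ℝ) (x : ℝ) :
    HasDerivAt (fun y : ℝ => 3 * π / 2 + ε * Real.log (Real.log (Real.exp 1 + (y - 1) ^ 4)))
      (ε * (4 * (x - 1) ^ 3 / (Real.exp 1 + (x - 1) ^ 4) /
        Real.log (Real.exp 1 + (x - 1) ^ 4))) x := by
  have hA := aux_hasDerivA x
  have hApos := aux_pos x
  have hL1 := aux_log_ge x
  have h1 := hA.log (ne_of_gt hApos)
  have h2 := (h1.log (by intro h; rw [h] at hL1; linarith)).const_mul ε
  simpa using h2.const_add (3 * π / 2)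


lemma aux_hasDeriv2 (ε : ℝ) (x : ℝ) :
    HasDerivAt (fun y : ℝ => ε * (4 * (y - 1) ^ 3 / (Real.exp 1 + (y - 1) ^ 4) /
        Real.log (Real.exp 1 + (y - 1) ^ 4)))
      (ε * ((12 * (x - 1) ^ 2 * (Real.exp 1 + (x - 1) ^ 4) * Real.log (Real.exp 1 + (x - 1) ^ 4)
          - 16 * (x - 1) ^ 6 * Real.log (Real.exp 1 + (x - 1) ^ 4) - 16 * (x - 1) ^ 6) /
        ((Real.exp 1 + (x - 1) ^ 4) ^ 2 * (Real.log (Real.exp 1 + (x - 1) ^ 4)) ^ 2))) x := by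
  have hA := aux_hasDerivA x
  have hApos := aux_pos x
  have hL1 := aux_log_ge x
  have hLne : Real.log (Real.exp 1 + (x - 1) ^ 4) ≠ 0 := by intro h; rw [h] at hL1; linarith
  have hn : HasDerivAt (fun y : ℝ => 4 * (y - 1) ^ 3) (12 * (x - 1) ^ 2) x := by
    have := (((hasDerivAt_id x).sub_const 1).pow 3).const_mul 4
    simpa using this.congr_deriv (by push_cast [id]; ring)
  have hq := hn.div hA (ne_of_gt hApos)
  have hL := hA.log (ne_of_gt hApos)
  have h := (hq.div hL hLne).const_mul ε
  refine h.congr_deriv ?_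
  simp only [Pi.div_apply]
  field_simp
  ring


theorem phi_second_deriv_estimate (ε : ℝ) (hε : 0 < ε) (φ : ℝ → ℝ)
    (hφ : ∀ t : ℝ, φ t = if t ≤ 1 then 3 * π / 2
      else 3 * π / 2 + ε * Real.log (Real.log (Real.exp 1 + (t - 1) ^ 4))) :
    ∀ t : ℝ, 1 < t →
      |deriv (deriv φ) t| * t ^ 2 * Real.log t ≤ 128 * ε := by
  intro t ht
  -- first: deriv φ agrees with F near t
  set F : ℝ → ℝ := fun y : ℝ => ε * (4 * (y - 1) ^ 3 / (Real.exp 1 + (y - 1) ^ 4) /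
        Real.log (Real.exp 1 + (y - 1) ^ 4)) with hF
  have hd1 : ∀ s : ℝ, 1 < s → deriv φ s = F s := by
    intro s hs
    have hev : φ =ᶠ[nhds s] fun y : ℝ =>
        3 * π / 2 + ε * Real.log (Real.log (Real.exp 1 + (y - 1) ^ 4)) := by
      filter_upwards [Ioi_mem_nhds hs] with y hy
      rw [hφ y, if_neg (not_le.mpr hy)]
    rw [hev.deriv_eq, (aux_hasDeriv1 ε s).deriv]
  have hd1_ev : deriv φ =ᶠ[nhds t] F := by
    filter_upwards [Ioi_mem_nhds ht] with s hs
    exact hd1 s hs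
  have hd2 : deriv (deriv φ) t = ε * ((12 * (t - 1) ^ 2 * (Real.exp 1 + (t - 1) ^ 4) *
        Real.log (Real.exp 1 + (t - 1) ^ 4)
          - 16 * (t - 1) ^ 6 * Real.log (Real.exp 1 + (t - 1) ^ 4) - 16 * (t - 1) ^ 6) /
        ((Real.exp 1 + (t - 1) ^ 4) ^ 2 * (Real.log (Real.exp 1 + (t - 1) ^ 4)) ^ 2)) := by
    rw [hd1_ev.deriv_eq, (aux_hasDeriv2 ε t).deriv]
  rw [hd2]
  clear hd2 hd1_ev hd1 hφ hF
  clear F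
  -- notation
  set u : ℝ := t - 1 with hu
  set a : ℝ := Real.exp 1 + u ^ 4 with ha
  set l : ℝ := Real.log a with hl
  have hu0 : 0 < u := by simp [hu]; linarith
  have he2 : (2:ℝ) ≤ Real.exp 1 := by
    have := Real.exp_one_gt_d9; linarith
  have he3 : Real.exp 1 ≤ 3 := by
    have := Real.exp_one_lt_d9; linarith
  have hapos : 0 < a := aux_pos t
  have hl1 : 1 ≤ l := aux_log_ge t
  have hlogt : Real.log t ≤ l := by
    rw [hl]
    apply Real.log_le_log (by linarith)
    rw [ha, hu]
    nlinarith [sq_nonneg ((t-1)^2 - 1/2), sq_nonneg ((t-1) - 1/2)]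
  have hlogt0 : 0 ≤ Real.log t := Real.log_nonneg (by linarith)
  have hnum : |12 * u ^ 2 * a * l - 16 * u ^ 6 * l - 16 * u ^ 6| ≤ (12 * u ^ 2 * a + 32 * u ^ 6) * l := by
    rw [abs_le]
    have h1 : (0:ℝ) ≤ u ^ 6 * l := by positivity
    have h2 : (0:ℝ) ≤ u ^ 6 * (l - 1) := by
      have : (0:ℝ) ≤ u ^ 6 := by positivity
      nlinarith
    have h3 : (0:ℝ) ≤ u ^ 2 * a * l := by positivity
    have h4 : (0:ℝ) ≤ u ^ 6 := by positivity
    constructor <;> nlinarith [h1, h2, h3, h4]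
  have hpoly : (12 * u ^ 2 * a + 32 * u ^ 6) * t ^ 2 ≤ 128 * a ^ 2 := by
    have htu : t = u + 1 := by rw [hu]; ring
    rw [htu, ha]
    have hp : 36*u^2 + 72*u^3 + 44*u^6 + 88*u^7 ≤ 512 + 476*u^4 + 84*u^8 := by
      nlinarith [sq_nonneg (u^3 - u^4), sq_nonneg (6*u^2 - 5*u^4), sq_nonneg (u - u^2),
        sq_nonneg (u^2 - 1), hu0.le]
    have e4 := mul_le_mul_of_nonneg_right he3 (pow_nonneg hu0.le 4)
    have e3 := mul_le_mul_of_nonneg_right he3 (pow_nonneg hu0.le 3)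
    have e2 := mul_le_mul_of_nonneg_right he3 (pow_nonneg hu0.le 2)
    have f4 := mul_le_mul_of_nonneg_right he2 (pow_nonneg hu0.le 4)
    have h1 : 12*Real.exp 1*u^4 ≤ 36*u^4 := by linarith
    have h2 : 24*Real.exp 1*u^3 ≤ 72*u^3 := by linarith
    have h3 : 12*Real.exp 1*u^2 ≤ 36*u^2 := by linarith
    have h4 : (512:ℝ) ≤ 128*(Real.exp 1)^2 := by nlinarith [sq_nonneg (Real.exp 1 - 2)]
    have h5 : 512*u^4 ≤ 256*Real.exp 1*u^4 := by linarith
    nlinarith [hp, h1, h2, h3, h4, h5]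
  rw [abs_mul, abs_of_pos hε, abs_div, abs_of_pos (by positivity : (0:ℝ) < a ^ 2 * l ^ 2)]
  calc ε * (|12 * u ^ 2 * a * l - 16 * u ^ 6 * l - 16 * u ^ 6| / (a ^ 2 * l ^ 2)) * t ^ 2 * Real.log t
      ≤ ε * (((12 * u ^ 2 * a + 32 * u ^ 6) * l) / (a ^ 2 * l ^ 2)) * t ^ 2 * l := by
        gcongr
    _ = ε * ((12 * u ^ 2 * a + 32 * u ^ 6) * t ^ 2) / a ^ 2 := by
        field_simp
    _ ≤ ε * (128 * a ^ 2) / a ^ 2 := by gcongr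
    _ = 128 * ε := by field_simp
end

section
/- Let a, b > 0 with a − b > 1, let 0 < ε < min{1, (a−1−b)/(224b)}, let φ(t) = 3π/2 for t ≤ 1 and φ(t) = 3π/2 + ε·ln(ln(e + (t−1)⁴)) for t > 1, and let g : [0,∞) → [0,∞) be defined by g(t) = t^(a + b·sin(φ(t))) for t > 0 and g(0) = 0. Then g(0) = 0, g(t) > 0 for t > 0, g(t)/t → 0 as t → 0⁺, g is differentiable on [0,∞) with g'(0) = 0, g is twice continuously differentiable on (0,∞), and g' is continuous on [0,∞). -/
open Real

private lemma relu4_hasDerivAt (x : ℝ) :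
    HasDerivAt (fun y : ℝ => max y 0 ^ 4) (4 * max x 0 ^ 3) x := by
  rcases lt_trichotomy x 0 with hx | hx | hx
  · have h0 : max x 0 = 0 := max_eq_right hx.le
    have : HasDerivAt (fun _ : ℝ => (0:ℝ)) (4 * max x 0 ^ 3) x := by
      simpa [h0] using hasDerivAt_const x (0:ℝ)
    refine this.congr_of_eventuallyEq ?_
    filter_upwards [Iio_mem_nhds hx] with y hy
    simp [max_eq_right (Set.mem_Iio.mp hy).le]
  · subst hx
    rw [hasDerivAt_iff_isLittleO]
    have hO : (fun y : ℝ => max y 0 ^ 4) =O[nhds 0] (fun y : ℝ => y ^ 4) := by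
      refine Asymptotics.IsBigO.of_bound 1 ?_
      filter_upwards with y
      rw [Real.norm_eq_abs, Real.norm_eq_abs, one_mul, abs_pow, abs_pow,
        abs_of_nonneg (le_max_right y 0)]
      exact pow_le_pow_left₀ (le_max_right y 0) (max_le (le_abs_self y) (abs_nonneg y)) 4
    have hlo : (fun y : ℝ => y ^ 4) =o[nhds 0] (fun y : ℝ => y) := by
      simpa using Asymptotics.isLittleO_pow_pow (𝕜 := ℝ) (by norm_num : 1 < 4)
    simpa using hO.trans_isLittleO hlo
  · have h0 : max x 0 = x := max_eq_left hx.le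
    have : HasDerivAt (fun y : ℝ => y ^ 4) (4 * max x 0 ^ 3) x := by
      simpa [h0] using hasDerivAt_pow 4 x
    refine this.congr_of_eventuallyEq ?_
    filter_upwards [Ioi_mem_nhds hx] with y hy
    simp [max_eq_left (le_of_lt (Set.mem_Ioi.mp hy))]

private lemma relu4_hasDerivAt2 (x : ℝ) :
    HasDerivAt (fun y : ℝ => 4 * max y 0 ^ 3) (12 * max x 0 ^ 2) x := by
  rcases lt_trichotomy x 0 with hx | hx | hx
  · have h0 : max x 0 = 0 := max_eq_right hx.le
    have : HasDerivAt (fun _ : ℝ => (0:ℝ)) (12 * max x 0 ^ 2) x := by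
      simpa [h0] using hasDerivAt_const x (0:ℝ)
    refine this.congr_of_eventuallyEq ?_
    filter_upwards [Iio_mem_nhds hx] with y hy
    simp [max_eq_right (Set.mem_Iio.mp hy).le]
  · subst hx
    rw [hasDerivAt_iff_isLittleO]
    have hO : (fun y : ℝ => 4 * max y 0 ^ 3) =O[nhds 0] (fun y : ℝ => y ^ 3) := by
      refine Asymptotics.IsBigO.of_bound 4 ?_
      filter_upwards with y
      rw [Real.norm_eq_abs, Real.norm_eq_abs, abs_mul, abs_pow, abs_pow,
        abs_of_nonneg (le_max_right y 0)]
      have : max y 0 ^ 3 ≤ |y| ^ 3 :=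
        pow_le_pow_left₀ (le_max_right y 0) (max_le (le_abs_self y) (abs_nonneg y)) 3
      calc |(4:ℝ)| * max y 0 ^ 3 = 4 * max y 0 ^ 3 := by norm_num
        _ ≤ 4 * |y| ^ 3 := by linarith
    have hlo : (fun y : ℝ => y ^ 3) =o[nhds 0] (fun y : ℝ => y) := by
      simpa using Asymptotics.isLittleO_pow_pow (𝕜 := ℝ) (by norm_num : 1 < 3)
    simpa using hO.trans_isLittleO hlo
  · have h0 : max x 0 = x := max_eq_left hx.le
    have : HasDerivAt (fun y : ℝ => 4 * y ^ 3) (12 * max x 0 ^ 2) x := by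
      have := ((hasDerivAt_pow 3 x).const_mul (4:ℝ))
      refine this.congr_deriv ?_
      simp [h0]; ring
    refine this.congr_of_eventuallyEq ?_
    filter_upwards [Ioi_mem_nhds hx] with y hy
    simp [max_eq_left (le_of_lt (Set.mem_Ioi.mp hy))]

private lemma relu4_contDiff : ContDiff ℝ 2 (fun y : ℝ => max y 0 ^ 4) := by
  have hd1 : deriv (fun y : ℝ => max y 0 ^ 4) = fun y => 4 * max y 0 ^ 3 :=
    funext fun x => (relu4_hasDerivAt x).deriv
  have hd2 : deriv (fun y : ℝ => 4 * max y 0 ^ 3) = fun y => 12 * max y 0 ^ 2 :=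
    funext fun x => (relu4_hasDerivAt2 x).deriv
  have h2 : ContDiff ℝ ((1:ℕ) + 1) (fun y : ℝ => max y 0 ^ 4) := by
    rw [contDiff_succ_iff_deriv]
    refine ⟨fun x => (relu4_hasDerivAt x).differentiableAt, by simp, ?_⟩
    rw [hd1]
    have h1 : ContDiff ℝ 1 (fun y : ℝ => 4 * max y 0 ^ 3) := by
      rw [contDiff_one_iff_deriv, hd2]
      exact ⟨fun x => (relu4_hasDerivAt2 x).differentiableAt, by fun_prop⟩
    exact_mod_cast h1
  exact_mod_cast h2

theorem g_basic_regularity (a b ε : ℝ) (ha : 0 < a) (hb : 0 < b)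
    (hab : 1 < a - b) (hε : 0 < ε) (hε' : ε < min 1 ((a - 1 - b) / (224 * b)))
    (φ : ℝ → ℝ)
    (hφ : ∀ t : ℝ, φ t = if t ≤ 1 then 3 * π / 2
      else 3 * π / 2 + ε * Real.log (Real.log (Real.exp 1 + (t - 1) ^ 4)))
    (g : ℝ → ℝ) (hg0 : g 0 = 0)
    (hg : ∀ t : ℝ, 0 < t → g t = t ^ (a + b * Real.sin (φ t))) :
    g 0 = 0 ∧
    (∀ t : ℝ, 0 < t → 0 < g t) ∧
    Filter.Tendsto (fun t => g t / t) (nhdsWithin 0 (Set.Ioi 0)) (nhds 0) ∧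
    DifferentiableOn ℝ g (Set.Ici 0) ∧
    HasDerivWithinAt g 0 (Set.Ici 0) 0 ∧
    ContDiffOn ℝ 2 g (Set.Ioi 0) ∧
    ContinuousOn (derivWithin g (Set.Ici 0)) (Set.Ici 0) := by
  have hsin : Real.sin (3 * π / 2) = -1 := by
    rw [show 3 * π / 2 = π + π / 2 by ring, Real.sin_add]; simp
  have habne : a - b - 1 ≠ 0 := by linarith
  set ψ : ℝ → ℝ := fun t =>
    a + b * Real.sin (3 * π / 2 + ε * Real.log (Real.log (Real.exp 1 + max (t - 1) 0 ^ 4)))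
    with hψdef
  have hMnn : ∀ t : ℝ, (0:ℝ) ≤ max (t - 1) 0 ^ 4 := fun t => by positivity
  have hexp1 : (1:ℝ) < Real.exp 1 := by
    have := Real.add_one_le_exp 1; linarith
  have hpos1 : ∀ t : ℝ, (0:ℝ) < Real.exp 1 + max (t - 1) 0 ^ 4 := fun t =>
    add_pos_of_pos_of_nonneg (Real.exp_pos 1) (hMnn t)
  have hpos2 : ∀ t : ℝ, (0:ℝ) < Real.log (Real.exp 1 + max (t - 1) 0 ^ 4) := fun t =>
    Real.log_pos (by nlinarith [hMnn t])
  have hψc : ∀ t : ℝ, ContDiffAt ℝ 2 ψ t := by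
    intro t
    have h1 : ContDiffAt ℝ 2 (fun t : ℝ => Real.exp 1 + max (t - 1) 0 ^ 4) t :=
      (contDiff_const.add (relu4_contDiff.comp (contDiff_id.sub contDiff_const))).contDiffAt
    have h2 : ContDiffAt ℝ 2 (fun t : ℝ => Real.log (Real.exp 1 + max (t - 1) 0 ^ 4)) t :=
      (Real.contDiffAt_log.mpr (ne_of_gt (hpos1 t))).comp (g := Real.log) t h1
    have h3 : ContDiffAt ℝ 2
        (fun t : ℝ => Real.log (Real.log (Real.exp 1 + max (t - 1) 0 ^ 4))) t :=
      (Real.contDiffAt_log.mpr (ne_of_gt (hpos2 t))).comp (g := Real.log) t h2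
    exact contDiffAt_const.add (contDiffAt_const.mul
      ((Real.contDiff_sin.contDiffAt).comp t (contDiffAt_const.add (contDiffAt_const.mul h3))))
  have hψφ : ∀ t : ℝ, a + b * Real.sin (φ t) = ψ t := by
    intro t
    rw [hφ]
    by_cases ht : t ≤ 1
    · rw [if_pos ht]
      have hmax : max (t - 1) 0 = 0 := max_eq_right (by linarith)
      simp [hψdef, hmax, Real.log_exp]
    · rw [if_neg ht]
      push_neg at ht
      have hmax : max (t - 1) 0 = t - 1 := max_eq_left (by linarith)
      simp [hψdef, hmax]
  have hgψ : ∀ t : ℝ, 0 < t → g t = t ^ ψ t := fun t ht => by rw [hg t ht, hψφ]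
  have hψlow : ∀ t : ℝ, t ≤ 1 → ψ t = a - b := by
    intro t ht
    rw [← hψφ, hφ, if_pos ht, hsin]; ring
  have hglow : ∀ t : ℝ, 0 < t → t ≤ 1 → g t = t ^ (a - b) := fun t ht h1 => by
    rw [hgψ t ht, hψlow t h1]
  have hpos : ∀ t : ℝ, 0 < t → 0 < g t := fun t ht => by
    rw [hgψ t ht]; exact Real.rpow_pos_of_pos ht _
  have htend : Filter.Tendsto (fun t => g t / t) (nhdsWithin 0 (Set.Ioi 0)) (nhds 0) := by
    have h1 : Filter.Tendsto (fun t : ℝ => t ^ (a - b - 1)) (nhdsWithin 0 (Set.Ioi 0)) (nhds 0) := by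
      have h2 := (Real.continuousAt_rpow_const 0 (a - b - 1) (Or.inr (by linarith))).tendsto
      rw [Real.zero_rpow habne] at h2
      exact h2.mono_left nhdsWithin_le_nhds
    refine h1.congr' ?_
    filter_upwards [self_mem_nhdsWithin, nhdsWithin_le_nhds (Iio_mem_nhds one_pos)] with t ht ht1
    have ht' : (0:ℝ) < t := Set.mem_Ioi.mp ht
    rw [hglow t ht' (Set.mem_Iio.mp ht1).le, Real.rpow_sub ht', Real.rpow_one]
  have hd0 : HasDerivWithinAt g 0 (Set.Ici 0) 0 := by
    have h1 : HasDerivAt (fun t : ℝ => t ^ (a - b)) ((a - b) * (0:ℝ) ^ (a - b - 1)) 0 :=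
      Real.hasDerivAt_rpow_const (Or.inr (by linarith))
    rw [Real.zero_rpow habne, mul_zero] at h1
    refine (h1.hasDerivWithinAt).congr_of_eventuallyEq ?_ ?_
    · filter_upwards [self_mem_nhdsWithin, nhdsWithin_le_nhds (Iio_mem_nhds one_pos)] with t ht ht1
      rcases eq_or_lt_of_le (Set.mem_Ici.mp ht) with h | h
      · rw [← h, hg0, Real.zero_rpow (by linarith : a - b ≠ 0)]
      · exact hglow t h (Set.mem_Iio.mp ht1).le
    · rw [hg0, Real.zero_rpow (by linarith : a - b ≠ 0)]
  have hG : ∀ x : ℝ, 0 < x → ContDiffAt ℝ 2 (fun t : ℝ => t ^ ψ t) x := fun x hx =>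
    contDiffAt_id.rpow (hψc x) (ne_of_gt hx)
  have hev : ∀ x : ℝ, 0 < x → g =ᶠ[nhds x] (fun t => t ^ ψ t) := by
    intro x hx
    filter_upwards [Ioi_mem_nhds hx] with t ht
    exact hgψ t (Set.mem_Ioi.mp ht)
  have hc2 : ContDiffOn ℝ 2 g (Set.Ioi 0) := by
    intro x hx
    exact ((hG x hx).congr_of_eventuallyEq (hev x hx)).contDiffWithinAt
  have hdiff : DifferentiableOn ℝ g (Set.Ici 0) := by
    intro x hx
    rcases eq_or_lt_of_le (Set.mem_Ici.mp hx) with h | h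
    · subst h; exact hd0.differentiableWithinAt
    · exact (((hev x h).differentiableAt_iff).mpr
        ((hG x h).differentiableAt (by norm_num))).differentiableWithinAt
  have hkey : ∀ x : ℝ, 0 < x → derivWithin g (Set.Ici 0) x = deriv g x := fun x hx =>
    derivWithin_of_mem_nhds (Ici_mem_nhds hx)
  have hderivG : ContinuousOn (deriv (fun t : ℝ => t ^ ψ t)) (Set.Ioi 0) := by
    have hcd : ContDiffOn ℝ 2 (fun t : ℝ => t ^ ψ t) (Set.Ioi 0) := fun x hx =>
      (hG x hx).contDiffWithinAt
    exact hcd.continuousOn_deriv_of_isOpen isOpen_Ioi (by norm_num)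
  have hgderiv : ∀ x : ℝ, 0 < x → deriv g x = deriv (fun t : ℝ => t ^ ψ t) x := fun x hx =>
    Filter.EventuallyEq.deriv_eq (hev x hx)
  have hdW0 : derivWithin g (Set.Ici 0) 0 = 0 :=
    hd0.derivWithin (uniqueDiffOn_Ici 0 0 Set.self_mem_Ici)
  have hcont : ContinuousOn (derivWithin g (Set.Ici 0)) (Set.Ici 0) := by
    intro x hx
    rcases eq_or_lt_of_le (Set.mem_Ici.mp hx) with h | h
    · subst h
      rw [ContinuousWithinAt, hdW0]
      have h1 : Filter.Tendsto (fun y : ℝ => (a - b) * y ^ (a - b - 1))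
          (nhdsWithin 0 (Set.Ici 0)) (nhds 0) := by
        have h2 := ((Real.continuousAt_rpow_const 0 (a - b - 1)
          (Or.inr (by linarith))).tendsto).const_mul (a - b)
        rw [Real.zero_rpow habne, mul_zero] at h2
        exact h2.mono_left nhdsWithin_le_nhds
      refine h1.congr' ?_
      filter_upwards [self_mem_nhdsWithin, nhdsWithin_le_nhds (Iio_mem_nhds one_pos)] with y hy hy1
      rcases eq_or_lt_of_le (Set.mem_Ici.mp hy) with h2 | h2
      · rw [← h2, hdW0, Real.zero_rpow habne, mul_zero]
      · rw [hkey y h2]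
        have hev2 : g =ᶠ[nhds y] (fun t => t ^ (a - b)) := by
          filter_upwards [Ioo_mem_nhds h2 (Set.mem_Iio.mp hy1)] with t ht
          exact hglow t ht.1 ht.2.le
        rw [hev2.deriv_eq]
        exact ((Real.hasDerivAt_rpow_const (p := a - b) (Or.inl (ne_of_gt h2))).deriv).symm
    · have hca : ContinuousAt (deriv (fun t : ℝ => t ^ ψ t)) x :=
        hderivG.continuousAt (Ioi_mem_nhds h)
      have hev3 : derivWithin g (Set.Ici 0) =ᶠ[nhds x] deriv (fun t : ℝ => t ^ ψ t) := by
        filter_upwards [Ioi_mem_nhds h] with y hy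
        rw [hkey y (Set.mem_Ioi.mp hy), hgderiv y (Set.mem_Ioi.mp hy)]
      have ht : Filter.Tendsto (derivWithin g (Set.Ici 0)) (nhds x)
          (nhds (deriv (fun t : ℝ => t ^ ψ t) x)) :=
        hca.tendsto.congr' hev3.symm
      rw [ContinuousWithinAt, hkey x h, hgderiv x h]
      exact ht.mono_left nhdsWithin_le_nhds
  exact ⟨hg0, hpos, htend, hdiff, hd0, hc2, hcont⟩
end

section
/- Let a, b > 0 with a − b > 1, let 0 < ε < min{1, (a−1−b)/(224b)}, let φ(t) = 3π/2 for t ≤ 1 and φ(t) = 3π/2 + ε·ln(ln(e + (t−1)⁴)) for t > 1, and let g(t) = t^(a + b·sin(φ(t))) for t > 0, g(0) = 0. Then for every t > 0: 0 < (a − b − 8bε)·g(t)/t ≤ g'(t) ≤ (a + b + 8bε)·g(t)/t. In particular g'(t) > 0 for every t > 0. -/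
open Real

open Filter Asymptotics in
set_option maxHeartbeats 2000000 in
theorem g_deriv_estimate (a b ε : ℝ) (ha : 0 < a) (hb : 0 < b)
    (hab : 1 < a - b) (hε : 0 < ε) (hε' : ε < min 1 ((a - 1 - b) / (224 * b)))
    (φ : ℝ → ℝ)
    (hφ : ∀ t : ℝ, φ t = if t ≤ 1 then 3 * π / 2
      else 3 * π / 2 + ε * Real.log (Real.log (Real.exp 1 + (t - 1) ^ 4)))
    (g : ℝ → ℝ) (hg0 : g 0 = 0)
    (hg : ∀ t : ℝ, 0 < t → g t = t ^ (a + b * Real.sin (φ t))) :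
    (∀ t : ℝ, 0 < t →
      0 < (a - b - 8 * b * ε) * (g t / t) ∧
      (a - b - 8 * b * ε) * (g t / t) ≤ deriv g t ∧
      deriv g t ≤ (a + b + 8 * b * ε) * (g t / t)) ∧
    (∀ t : ℝ, 0 < t → 0 < deriv g t) := by
  have he : (0:ℝ) < Real.exp 1 := Real.exp_pos 1
  have he2 : (2:ℝ) ≤ Real.exp 1 := by
    have := Real.add_one_le_exp (1:ℝ); linarith
  -- basic facts about u t := e + (t-1)^4
  have hu : ∀ t : ℝ, 0 < Real.exp 1 + (t - 1) ^ 4 := by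
    intro t; nlinarith [sq_nonneg ((t-1)^2)]
  have hL : ∀ t : ℝ, 1 ≤ Real.log (Real.exp 1 + (t - 1) ^ 4) := by
    intro t
    have := Real.log_le_log he (show Real.exp 1 ≤ Real.exp 1 + (t-1)^4 by nlinarith [sq_nonneg ((t-1)^2)])
    rwa [Real.log_exp] at this
  -- log log bound
  have hll : ∀ y : ℝ, 0 ≤ y → Real.log (Real.log (Real.exp 1 + y)) ≤ y / Real.exp 1 := by
    intro y hy
    have h1 : Real.log (Real.exp 1 + y) ≤ 1 + y / Real.exp 1 := by
      have h := Real.log_le_sub_one_of_pos (show (0:ℝ) < (Real.exp 1 + y)/Real.exp 1 by positivity)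
      rw [Real.log_div (by positivity) (ne_of_gt he), Real.log_exp] at h
      have : (Real.exp 1 + y)/Real.exp 1 = 1 + y/Real.exp 1 := by field_simp
      linarith [this ▸ h]
    have hL1 : 1 ≤ Real.log (Real.exp 1 + y) := by
      have := Real.log_le_log he (show Real.exp 1 ≤ Real.exp 1 + y by linarith)
      rwa [Real.log_exp] at this
    have h2 := Real.log_le_sub_one_of_pos (show (0:ℝ) < Real.log (Real.exp 1 + y) by linarith)
    linarith
  -- derivative of φ
  set p : ℝ → ℝ := fun t => if t ≤ 1 then 0 else
    ε * (4 * (t - 1) ^ 3 / (Real.exp 1 + (t - 1) ^ 4) / Real.log (Real.exp 1 + (t - 1) ^ 4)) with hp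
  have hψd : ∀ t : ℝ, HasDerivAt (fun x => 3 * π / 2 +
      ε * Real.log (Real.log (Real.exp 1 + (x - 1) ^ 4)))
      (ε * (4 * (t - 1) ^ 3 / (Real.exp 1 + (t - 1) ^ 4) / Real.log (Real.exp 1 + (t - 1) ^ 4))) t := by
    intro t
    have h1 : HasDerivAt (fun x : ℝ => Real.exp 1 + (x - 1) ^ 4) (4 * (t - 1) ^ 3) t := by
      have := (((hasDerivAt_id t).sub_const 1).pow 4).const_add (Real.exp 1)
      simpa using this
    have h2 := h1.log (ne_of_gt (hu t))
    have h3 := h2.log (by have := hL t; intro h; rw [h] at this; linarith)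
    have h4 := (h3.const_mul ε).const_add (3 * π / 2)
    convert h4 using 1
  have hφd : ∀ t : ℝ, HasDerivAt φ (p t) t := by
    intro t
    rcases lt_trichotomy t 1 with h | h | h
    · rw [hp]; simp only [if_pos h.le]
      refine (hasDerivAt_const t (3 * π / 2)).congr_of_eventuallyEq ?_
      filter_upwards [Iio_mem_nhds h] with x hx
      rw [hφ x, if_pos (le_of_lt hx)]
    · subst h
      rw [hp]; simp only [le_refl, if_pos]
      rw [hasDerivAt_iff_isLittleO]
      simp only [smul_zero, sub_zero]
      rw [Asymptotics.isLittleO_iff]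
      intro c hc
      rw [Metric.eventually_nhds_iff]
      refine ⟨min 1 (c * Real.exp 1 / ε), by positivity, fun t ht => ?_⟩
      rw [Real.dist_eq] at ht
      have ht1 : |t - 1| ≤ 1 := (le_of_lt ht).trans (min_le_left _ _)
      have ht2 : |t - 1| ≤ c * Real.exp 1 / ε := (le_of_lt ht).trans (min_le_right _ _)
      rw [hφ 1, if_pos le_rfl, hφ t]
      by_cases h : t ≤ 1
      · simp only [if_pos h, sub_self, norm_zero]
        positivity
      · push_neg at h
        simp only [if_neg (not_le.mpr h)]
        have hs : 0 < t - 1 := by linarith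
        have hb1 : 0 ≤ Real.log (Real.log (Real.exp 1 + (t-1)^4)) := by
          have := hL t
          have : (1:ℝ) ≤ Real.log (Real.exp 1 + (t-1)^4) := this
          have := Real.log_nonneg this
          linarith
        have hb2 : Real.log (Real.log (Real.exp 1 + (t-1)^4)) ≤ (t-1)^4 / Real.exp 1 :=
          hll _ (by positivity)
        have habs : |t - 1| = t - 1 := abs_of_pos hs
        rw [habs] at ht1 ht2
        have hval : 3 * π / 2 + ε * Real.log (Real.log (Real.exp 1 + (t - 1) ^ 4)) - 3 * π / 2
            = ε * Real.log (Real.log (Real.exp 1 + (t - 1) ^ 4)) := by ring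
        rw [hval, Real.norm_eq_abs, Real.norm_eq_abs, habs,
          abs_of_nonneg (by positivity : (0:ℝ) ≤ ε * Real.log (Real.log (Real.exp 1 + (t - 1) ^ 4)))]
        have h5 : ε * ((t-1)^4 / Real.exp 1) ≤ c * (t - 1) := by
          have ht2' : (t - 1) * ε ≤ c * Real.exp 1 := (le_div_iff₀ hε).mp ht2
          rw [← mul_div_assoc, div_le_iff₀ he]
          nlinarith [mul_le_mul_of_nonneg_left ht2' hs.le, hε.le, hc.le,
            mul_nonneg (mul_nonneg hε.le (mul_nonneg hs.le hs.le))
              (by nlinarith : (0:ℝ) ≤ 1 - (t-1)^2)]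
        calc ε * Real.log (Real.log (Real.exp 1 + (t - 1) ^ 4))
            ≤ ε * ((t-1)^4 / Real.exp 1) := mul_le_mul_of_nonneg_left hb2 hε.le
          _ ≤ c * (t - 1) := h5
    · rw [hp]; simp only [if_neg (not_le.mpr h)]
      refine (hψd t).congr_of_eventuallyEq ?_
      filter_upwards [Ioi_mem_nhds h] with x hx
      rw [hφ x, if_neg (not_le.mpr hx)]
  -- key estimate
  have hkey : ∀ t : ℝ, 0 < t → |t * p t * Real.log t| ≤ 8 * ε := by
    intro t ht
    by_cases h : t ≤ 1
    · rw [hp]; simp only [if_pos h, mul_zero, zero_mul, abs_zero]; positivity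
    · push_neg at h
      rw [hp]; simp only [if_neg (not_le.mpr h)]
      set s := t - 1 with hs
      have hs0 : 0 < s := by simp [hs]; linarith
      set u := Real.exp 1 + s ^ 4 with hudef
      have hu0 : 0 < u := hu t
      set L := Real.log u with hLdef
      have hL1 : 1 ≤ L := hL t
      have hlt0 : 0 ≤ Real.log t := Real.log_nonneg (by linarith)
      have htu : t ≤ u := by
        rw [hudef, hs]
        nlinarith [sq_nonneg (t - 2), sq_nonneg ((t-1)^2 - 1), sq_nonneg (t-1)]
      have hltL : Real.log t ≤ L := Real.log_le_log ht htu
      have hts : t * s ^ 3 ≤ 2 * u := by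
        rw [hudef, hs]
        nlinarith [sq_nonneg ((t-1)^2 - 1), sq_nonneg (t-1)]
      have hkey2 : 4 * (t * s ^ 3 * Real.log t) ≤ 8 * (u * L) := by
        have h1 : t * s ^ 3 * Real.log t ≤ t * s ^ 3 * L :=
          mul_le_mul_of_nonneg_left hltL (by positivity)
        have h2 : t * s ^ 3 * L ≤ 2 * u * L :=
          mul_le_mul_of_nonneg_right hts (by linarith)
        nlinarith
      have heq : t * (ε * (4 * s ^ 3 / u / L)) * Real.log t
          = ε * (4 * (t * s ^ 3 * Real.log t) / (u * L)) := by
        field_simp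
      rw [heq, abs_of_nonneg (by
        apply mul_nonneg hε.le
        apply div_nonneg _ (by positivity)
        have : (0:ℝ) ≤ t * s^3 * Real.log t := by positivity
        linarith)]
      have : 4 * (t * s ^ 3 * Real.log t) / (u * L) ≤ 8 := by
        rw [div_le_iff₀ (by positivity)]
        linarith [hkey2]
      nlinarith
  -- derivative of g
  have hgd : ∀ t : ℝ, 0 < t → deriv g t =
      (g t / t) * ((a + b * Real.sin (φ t)) + t * (b * (Real.cos (φ t) * p t)) * Real.log t) := by
    intro t ht
    have hA : HasDerivAt (fun x => a + b * Real.sin (φ x)) (b * (Real.cos (φ t) * p t)) t := by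
      exact ((hasDerivAt_const t a).add (((hφd t).sin).const_mul b)).congr_deriv (by ring)
    have hr : HasDerivAt (fun x : ℝ => x ^ (a + b * Real.sin (φ x)))
        (1 * (a + b * Real.sin (φ t)) * t ^ ((a + b * Real.sin (φ t)) - 1)
          + (b * (Real.cos (φ t) * p t)) * t ^ (a + b * Real.sin (φ t)) * Real.log t) t :=
      (hasDerivAt_id t).rpow hA ht
    have hgl : HasDerivAt g
        (1 * (a + b * Real.sin (φ t)) * t ^ ((a + b * Real.sin (φ t)) - 1)
          + (b * (Real.cos (φ t) * p t)) * t ^ (a + b * Real.sin (φ t)) * Real.log t) t := by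
      refine hr.congr_of_eventuallyEq ?_
      filter_upwards [Ioi_mem_nhds ht] with x hx
      exact hg x hx
    rw [hgl.deriv, hg t ht, Real.rpow_sub ht, Real.rpow_one]
    have h0 : t ^ (a + b * Real.sin (φ t)) ≠ 0 := ne_of_gt (Real.rpow_pos_of_pos ht _)
    field_simp
  -- numeric bound on 8bε
  have h8 : 8 * b * ε < a - b - 1 := by
    have h1 : ε < (a - 1 - b) / (224 * b) := lt_of_lt_of_le hε' (min_le_right _ _)
    rw [lt_div_iff₀ (by positivity)] at h1
    nlinarith
  have main : ∀ t : ℝ, 0 < t →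
      0 < (a - b - 8 * b * ε) * (g t / t) ∧
      (a - b - 8 * b * ε) * (g t / t) ≤ deriv g t ∧
      deriv g t ≤ (a + b + 8 * b * ε) * (g t / t) := by
    intro t ht
    have hGpos : 0 < g t / t := by
      rw [hg t ht]; exact div_pos (Real.rpow_pos_of_pos ht _) ht
    have hsin1 : -1 ≤ Real.sin (φ t) := Real.neg_one_le_sin _
    have hsin2 : Real.sin (φ t) ≤ 1 := Real.sin_le_one _
    have hcos : |Real.cos (φ t)| ≤ 1 := Real.abs_cos_le_one _
    have hprod : |t * (b * (Real.cos (φ t) * p t)) * Real.log t| ≤ 8 * b * ε := by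
      have h1 : t * (b * (Real.cos (φ t) * p t)) * Real.log t
          = b * (Real.cos (φ t) * (t * p t * Real.log t)) := by ring
      rw [h1, abs_mul, abs_of_pos hb, abs_mul]
      calc b * (|Real.cos (φ t)| * |t * p t * Real.log t|)
          ≤ b * (1 * (8 * ε)) := by
            apply mul_le_mul_of_nonneg_left _ hb.le
            exact mul_le_mul hcos (hkey t ht) (abs_nonneg _) zero_le_one
        _ = 8 * b * ε := by ring
    rw [abs_le] at hprod
    have hbs1 : -b ≤ b * Real.sin (φ t) := by nlinarith [mul_le_mul_of_nonneg_left hsin1 hb.le]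
    have hbs2 : b * Real.sin (φ t) ≤ b := mul_le_mul_of_nonneg_left hsin2 hb.le |>.trans_eq (mul_one b)
    have hlow : a - b - 8 * b * ε ≤
        (a + b * Real.sin (φ t)) + t * (b * (Real.cos (φ t) * p t)) * Real.log t := by
      linarith [hprod.1]
    have hhigh : (a + b * Real.sin (φ t)) + t * (b * (Real.cos (φ t) * p t)) * Real.log t
        ≤ a + b + 8 * b * ε := by
      linarith [hprod.2]
    have hcpos : 0 < a - b - 8 * b * ε := by linarith
    refine ⟨mul_pos hcpos hGpos, ?_, ?_⟩
    · rw [hgd t ht]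
      exact mul_le_mul_of_nonneg_left hlow hGpos.le |>.trans_eq (by ring) |>.trans_eq' (by ring)
    · rw [hgd t ht]
      exact mul_le_mul_of_nonneg_left hhigh hGpos.le |>.trans_eq' (by ring) |>.trans_eq (by ring)
  refine ⟨main, fun t ht => ?_⟩
  obtain ⟨h1, h2, _⟩ := main t ht
  linarith
end

section
/- Let a, b > 0 with a − b > 1, let 0 < ε < min{1, (a−1−b)/(224b)}, let φ(t) = 3π/2 for t ≤ 1 and φ(t) = 3π/2 + ε·ln(ln(e + (t−1)⁴)) for t > 1, and let g(t) = t^(a + b·sin(φ(t))) for t > 0, g(0) = 0. Then for every t > 0: 0 < (a − b − 8bε)·t^(a−b−1) ≤ g'(t) ≤ (a + b + 8bε)·(t^(a−b−1) + t^(a+b−1)). -/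
open Real Asymptotics

noncomputable def psiAux (ε t : ℝ) : ℝ :=
  if t ≤ 1 then 0
  else ε * (4 * (t - 1) ^ 3 / ((Real.exp 1 + (t - 1) ^ 4) * Real.log (Real.exp 1 + (t - 1) ^ 4)))


lemma loglog_le (x : ℝ) (hx : 0 ≤ x) :
    Real.log (Real.log (Real.exp 1 + x)) ≤ x := by
  have he : (0:ℝ) < Real.exp 1 := Real.exp_pos 1
  have h1 : Real.log (Real.exp 1 + x) ≤ 1 + x / Real.exp 1 := by
    have := Real.log_le_sub_one_of_pos (show (0:ℝ) < (Real.exp 1 + x) / Real.exp 1 by positivity)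
    rw [Real.log_div (by positivity) he.ne', Real.log_exp] at this
    have : Real.log (Real.exp 1 + x) - 1 ≤ (Real.exp 1 + x) / Real.exp 1 - 1 := this
    have hd : (Real.exp 1 + x) / Real.exp 1 = 1 + x / Real.exp 1 := by field_simp
    linarith [hd ▸ this]
  have h2 : Real.log (Real.log (Real.exp 1 + x)) ≤ Real.log (1 + x / Real.exp 1) := by
    apply Real.log_le_log
    · have : Real.log (Real.exp 1) ≤ Real.log (Real.exp 1 + x) :=
        Real.log_le_log he (by linarith)
      rw [Real.log_exp] at this; linarith
    · exact h1
  have h3 : Real.log (1 + x / Real.exp 1) ≤ x / Real.exp 1 := by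
    have := Real.log_le_sub_one_of_pos (show (0:ℝ) < 1 + x / Real.exp 1 by positivity)
    linarith
  have h4 : x / Real.exp 1 ≤ x := by
    rw [div_le_iff₀ he]
    nlinarith [Real.exp_one_gt_d9]
  linarith

lemma loglog_nonneg (x : ℝ) (hx : 0 ≤ x) :
    0 ≤ Real.log (Real.log (Real.exp 1 + x)) := by
  apply Real.log_nonneg
  have : Real.log (Real.exp 1) ≤ Real.log (Real.exp 1 + x) :=
    Real.log_le_log (Real.exp_pos 1) (by linarith)
  rw [Real.log_exp] at this; linarith

lemma phiAux_deriv_one (ε : ℝ) (hε : 0 ≤ ε) :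
    HasDerivAt (fun s => if s ≤ 1 then 3 * π / 2
      else 3 * π / 2 + ε * Real.log (Real.log (Real.exp 1 + (s - 1) ^ 4))) 0 1 := by
  rw [hasDerivAt_iff_isLittleO]
  have hbig : (fun s : ℝ => (if s ≤ 1 then 3 * π / 2
      else 3 * π / 2 + ε * Real.log (Real.log (Real.exp 1 + (s - 1) ^ 4)))
      - (if (1:ℝ) ≤ 1 then 3 * π / 2
      else 3 * π / 2 + ε * Real.log (Real.log (Real.exp 1 + ((1:ℝ) - 1) ^ 4))) - (s - 1) • 0)
      =O[nhds 1] (fun s : ℝ => (s - 1) ^ 4) := by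
    apply isBigO_of_le' (c := ε)
    intro s
    simp only [le_refl, if_true, smul_zero, sub_zero, Real.norm_eq_abs]
    rcases le_or_gt s 1 with hs | hs
    · simp [hs]; positivity
    · rw [if_neg (not_le.mpr hs)]
      have h0 : (0:ℝ) ≤ (s-1)^4 := by positivity
      have habs : |3 * π / 2 + ε * Real.log (Real.log (Real.exp 1 + (s - 1) ^ 4)) - 3 * π / 2|
          = ε * Real.log (Real.log (Real.exp 1 + (s - 1) ^ 4)) := by
        rw [abs_of_nonneg]
        · ring
        · nlinarith [loglog_nonneg ((s-1)^4) h0]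
      rw [habs, abs_of_nonneg h0]
      nlinarith [loglog_le ((s-1)^4) h0, loglog_nonneg ((s-1)^4) h0]
  have hlit : (fun s : ℝ => (s - 1) ^ 4) =o[nhds 1] (fun s : ℝ => s - 1) := by
    have h1 : (fun s : ℝ => (s - 1) ^ 3) =o[nhds 1] (fun _ : ℝ => (1:ℝ)) := by
      rw [isLittleO_one_iff]
      have : ContinuousAt (fun s : ℝ => (s - 1) ^ 3) 1 := by fun_prop
      have := this.tendsto
      simpa using this
    have := h1.mul_isBigO (isBigO_refl (fun s : ℝ => s - 1) (nhds 1))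
    simp only [one_mul] at this
    have e : (fun s : ℝ => (s - 1) ^ 4) = fun s : ℝ => (s - 1) ^ 3 * (s - 1) := by
      funext s; ring
    rw [e]; exact this
  exact hbig.trans_isLittleO hlit

lemma phiAux_deriv (ε : ℝ) (hε : 0 ≤ ε) (t : ℝ) :
    HasDerivAt (fun s => if s ≤ 1 then 3 * π / 2
      else 3 * π / 2 + ε * Real.log (Real.log (Real.exp 1 + (s - 1) ^ 4))) (psiAux ε t) t := by
  rcases lt_trichotomy t 1 with h | h | h
  · have : psiAux ε t = 0 := by simp [psiAux, h.le]
    rw [this]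
    have : (fun s : ℝ => 3 * π / 2) =ᶠ[nhds t] (fun s => if s ≤ 1 then 3 * π / 2
        else 3 * π / 2 + ε * Real.log (Real.log (Real.exp 1 + (s - 1) ^ 4))) := by
      filter_upwards [Iio_mem_nhds h] with s hs
      simp [le_of_lt (Set.mem_Iio.mp hs)]
    exact (hasDerivAt_const t _).congr_of_eventuallyEq this.symm
  · subst h
    have : psiAux ε 1 = 0 := by simp [psiAux]
    rw [this]
    exact phiAux_deriv_one ε hε
  · -- t > 1
    have h1 : ¬ t ≤ 1 := not_le.mpr h
    have hepos : ∀ s : ℝ, 0 < Real.exp 1 + (s - 1) ^ 4 := by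
      intro s; positivity
    have hlpos : ∀ s : ℝ, 0 < Real.log (Real.exp 1 + (s - 1) ^ 4) := by
      intro s
      have h2 : Real.log (Real.exp 1) ≤ Real.log (Real.exp 1 + (s - 1) ^ 4) :=
        Real.log_le_log (Real.exp_pos 1) (by nlinarith [sq_nonneg ((s-1)^2)])
      rw [Real.log_exp] at h2
      linarith
    have hinner : HasDerivAt (fun s : ℝ => Real.exp 1 + (s - 1) ^ 4) (4 * (t - 1) ^ 3) t := by
      have : HasDerivAt (fun s : ℝ => (s - 1) ^ 4) (4 * (t - 1) ^ 3) t := by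
        have := ((hasDerivAt_id t).sub_const 1).pow 4
        simp at this; exact this
      simpa using this.const_add (Real.exp 1)
    have hlog1 : HasDerivAt (fun s : ℝ => Real.log (Real.exp 1 + (s - 1) ^ 4))
        (4 * (t - 1) ^ 3 / (Real.exp 1 + (t - 1) ^ 4)) t := hinner.log (hepos t).ne'
    have hlog2 : HasDerivAt (fun s : ℝ => Real.log (Real.log (Real.exp 1 + (s - 1) ^ 4)))
        ((4 * (t - 1) ^ 3 / (Real.exp 1 + (t - 1) ^ 4)) / Real.log (Real.exp 1 + (t - 1) ^ 4)) t :=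
      hlog1.log (hlpos t).ne'
    have hfull := (hlog2.const_mul ε).const_add (3 * π / 2)
    have heq : (fun s : ℝ => 3 * π / 2 + ε * Real.log (Real.log (Real.exp 1 + (s - 1) ^ 4)))
        =ᶠ[nhds t] (fun s => if s ≤ 1 then 3 * π / 2
        else 3 * π / 2 + ε * Real.log (Real.log (Real.exp 1 + (s - 1) ^ 4))) := by
      filter_upwards [Ioi_mem_nhds h] with s hs
      simp [not_le.mpr (Set.mem_Ioi.mp hs)]
    have := hfull.congr_of_eventuallyEq heq.symm
    have hψ : psiAux ε t = ε * (4 * (t - 1) ^ 3 / (Real.exp 1 + (t - 1) ^ 4) / Real.log (Real.exp 1 + (t - 1) ^ 4)) := by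
      simp only [psiAux, h1, if_false]
      field_simp
    rw [hψ]; exact this

lemma core_ineq (s : ℝ) (hs : 0 < s) :
    4 * s ^ 3 * ((1 + s) * Real.log (1 + s)) ≤
      8 * ((Real.exp 1 + s ^ 4) * Real.log (Real.exp 1 + s ^ 4)) := by
  have he : (2:ℝ) ≤ Real.exp 1 := by nlinarith [Real.exp_one_gt_d9]
  have hl2 : (1:ℝ) ≤ Real.log (Real.exp 1 + s ^ 4) := by
    have := Real.log_le_log (Real.exp_pos 1) (show Real.exp 1 ≤ Real.exp 1 + s ^ 4 from le_add_of_nonneg_right (by positivity))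
    rwa [Real.log_exp] at this
  have hl1n : 0 ≤ Real.log (1 + s) := Real.log_nonneg (by linarith)
  rcases le_or_gt s 1 with h1 | h1
  · have hl1 : Real.log (1 + s) ≤ s := by
      have := Real.log_le_sub_one_of_pos (show (0:ℝ) < 1 + s by linarith)
      linarith
    nlinarith [pow_pos hs 3, pow_pos hs 4, pow_le_one₀ hs.le h1 (n := 4),
      pow_le_one₀ hs.le h1 (n := 3),
      mul_le_mul_of_nonneg_left hl1 (show (0:ℝ) ≤ 4 * s ^ 3 * (1 + s) by positivity),
      mul_le_mul_of_nonneg_left hl2 (show (0:ℝ) ≤ 8 * (Real.exp 1 + s ^ 4) by positivity)]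
  · have hle : (1:ℝ) + s ≤ Real.exp 1 + s ^ 4 := by
      nlinarith [mul_nonneg (mul_nonneg hs.le (by linarith : (0:ℝ) ≤ s - 1))
        (by positivity : (0:ℝ) ≤ s ^ 2 + s + 1)]
    have hl12 : Real.log (1 + s) ≤ Real.log (Real.exp 1 + s ^ 4) :=
      Real.log_le_log (by linarith) hle
    nlinarith [mul_le_mul_of_nonneg_left hl12 (show (0:ℝ) ≤ 4 * s ^ 3 * (1 + s) by positivity),
      mul_le_mul_of_nonneg_left (show (1:ℝ) + s ≤ 2 * s by linarith)
        (mul_nonneg (show (0:ℝ) ≤ 4 * s ^ 3 by positivity) (le_trans zero_le_one hl2)),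
      mul_le_mul_of_nonneg_right (show 4 * s ^ 3 * (2 * s) ≤ 8 * (Real.exp 1 + s ^ 4) by nlinarith)
        (le_trans zero_le_one hl2)]

lemma psiAux_bound (ε t : ℝ) (hε : 0 ≤ ε) (ht : 0 < t) :
    0 ≤ psiAux ε t * (t * Real.log t) ∧ psiAux ε t * (t * Real.log t) ≤ 8 * ε := by
  rcases le_or_gt t 1 with h | h
  · simp [psiAux, h]; positivity
  · have h1 : ¬ t ≤ 1 := not_le.mpr h
    set s := t - 1 with hsdef
    have hs : 0 < s := by simp [hsdef]; linarith
    have hts : t = 1 + s := by ring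
    have hl2 : (1:ℝ) ≤ Real.log (Real.exp 1 + s ^ 4) := by
      have := Real.log_le_log (Real.exp_pos 1)
        (show Real.exp 1 ≤ Real.exp 1 + s ^ 4 from le_add_of_nonneg_right (by positivity))
      rwa [Real.log_exp] at this
    have hepos : (0:ℝ) < Real.exp 1 + s ^ 4 := by positivity
    have hdenpos : (0:ℝ) < (Real.exp 1 + s ^ 4) * Real.log (Real.exp 1 + s ^ 4) := by
      nlinarith
    have hlogt : 0 ≤ Real.log t := Real.log_nonneg (by linarith)
    have hpsi : psiAux ε t = ε * (4 * s ^ 3 / ((Real.exp 1 + s ^ 4) * Real.log (Real.exp 1 + s ^ 4))) := by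
      simp [psiAux, h1, hsdef]
    constructor
    · rw [hpsi]
      have : 0 ≤ 4 * s ^ 3 / ((Real.exp 1 + s ^ 4) * Real.log (Real.exp 1 + s ^ 4)) := by
        positivity
      positivity
    · rw [hpsi, hts]
      have key : 4 * s ^ 3 / ((Real.exp 1 + s ^ 4) * Real.log (Real.exp 1 + s ^ 4)) *
          ((1 + s) * Real.log (1 + s)) ≤ 8 := by
        rw [div_mul_eq_mul_div, div_le_iff₀ hdenpos]
        nlinarith [core_ineq s hs]
      calc ε * (4 * s ^ 3 / ((Real.exp 1 + s ^ 4) * Real.log (Real.exp 1 + s ^ 4))) *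
            ((1 + s) * Real.log (1 + s))
          = ε * (4 * s ^ 3 / ((Real.exp 1 + s ^ 4) * Real.log (Real.exp 1 + s ^ 4)) *
            ((1 + s) * Real.log (1 + s))) := by ring
        _ ≤ ε * 8 := mul_le_mul_of_nonneg_left key hε
        _ = 8 * ε := by ring

set_option maxHeartbeats 1000000 in
theorem g_deriv_power_estimate (a b ε : ℝ) (ha : 0 < a) (hb : 0 < b)
    (hab : 1 < a - b) (hε : 0 < ε) (hε' : ε < min 1 ((a - 1 - b) / (224 * b)))
    (φ : ℝ → ℝ)
    (hφ : ∀ t : ℝ, φ t = if t ≤ 1 then 3 * π / 2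
      else 3 * π / 2 + ε * Real.log (Real.log (Real.exp 1 + (t - 1) ^ 4)))
    (g : ℝ → ℝ) (hg0 : g 0 = 0)
    (hg : ∀ t : ℝ, 0 < t → g t = t ^ (a + b * Real.sin (φ t))) :
    ∀ t : ℝ, 0 < t →
      0 < (a - b - 8 * b * ε) * t ^ (a - b - 1) ∧
      (a - b - 8 * b * ε) * t ^ (a - b - 1) ≤ deriv g t ∧
      deriv g t ≤ (a + b + 8 * b * ε) * (t ^ (a - b - 1) + t ^ (a + b - 1)) := by
  intro t ht
  -- basic numeric facts
  have hεmin := (lt_min_iff.mp hε').2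
  have h224 : 224 * b * ε < a - 1 - b := by
    rw [lt_div_iff₀ (by positivity)] at hεmin
    linarith
  have hbε : 0 < b * ε := mul_pos hb hε
  have hkey : 8 * b * ε < a - 1 - b := by nlinarith
  have hpos1 : 0 < a - b - 8 * b * ε := by linarith
  -- derivative of φ
  have hφf : φ = fun s => if s ≤ 1 then 3 * π / 2
      else 3 * π / 2 + ε * Real.log (Real.log (Real.exp 1 + (s - 1) ^ 4)) := funext hφ
  have hdφ : HasDerivAt φ (psiAux ε t) t := by
    rw [hφf]; exact phiAux_deriv ε hε.le t
  -- derivative of P s = a + b * sin (φ s)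
  set P : ℝ → ℝ := fun s => a + b * Real.sin (φ s) with hPdef
  have hdP : HasDerivAt P (b * (Real.cos (φ t) * psiAux ε t)) t :=
    ((hdφ.sin).const_mul b).const_add a
  -- derivative of g
  have hdlm : HasDerivAt (fun s => Real.log s * P s)
      (t⁻¹ * P t + Real.log t * (b * (Real.cos (φ t) * psiAux ε t))) t :=
    (Real.hasDerivAt_log ht.ne').mul hdP
  have hgev : (fun s => Real.exp (Real.log s * P s)) =ᶠ[nhds t] g := by
    filter_upwards [Ioi_mem_nhds ht] with s hs
    rw [hg s hs, Real.rpow_def_of_pos hs]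
  have hdg : HasDerivAt g (Real.exp (Real.log t * P t) *
      (t⁻¹ * P t + Real.log t * (b * (Real.cos (φ t) * psiAux ε t)))) t :=
    (hdlm.exp).congr_of_eventuallyEq hgev.symm
  have hderiv : deriv g t = t ^ (P t) *
      (t⁻¹ * P t + Real.log t * (b * (Real.cos (φ t) * psiAux ε t))) := by
    rw [hdg.deriv, ← Real.rpow_def_of_pos ht]
  -- normal form
  set X : ℝ := psiAux ε t * (t * Real.log t) with hXdef
  set Q : ℝ := b * Real.cos (φ t) * X with hQdef
  have hnf : deriv g t = t ^ (P t - 1) * (P t + Q) := by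
    have e1 : t ^ (P t - 1) = t ^ P t * t⁻¹ := by
      rw [Real.rpow_sub ht, Real.rpow_one, div_eq_mul_inv]
    have hc : t⁻¹ * t = 1 := inv_mul_cancel₀ ht.ne'
    rw [hderiv, hQdef, hXdef, e1]
    linear_combination (-(t ^ P t * b * Real.cos (φ t) * psiAux ε t * Real.log t)) * hc
  obtain ⟨hX1, hX2⟩ := psiAux_bound ε t hε.le ht
  rw [← hXdef] at hX1 hX2
  have hcos1 := Real.cos_le_one (φ t)
  have hcos2 := Real.neg_one_le_cos (φ t)
  have hsin1 := Real.sin_le_one (φ t)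
  have hsin2 := Real.neg_one_le_sin (φ t)
  have hPl : a - b ≤ P t := by simp only [hPdef]; nlinarith
  have hPu : P t ≤ a + b := by simp only [hPdef]; nlinarith
  have hQu : Q ≤ 8 * b * ε := by
    rw [hQdef]
    nlinarith [mul_nonneg hb.le (mul_nonneg (sub_nonneg.mpr hcos1) hX1),
      mul_le_mul_of_nonneg_left hX2 hb.le]
  have hQl : -(8 * b * ε) ≤ Q := by
    rw [hQdef]
    nlinarith [mul_nonneg hb.le (mul_nonneg (by linarith : (0:ℝ) ≤ 1 + Real.cos (φ t)) hX1),
      mul_le_mul_of_nonneg_left hX2 hb.le]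
  have hrp1 : (0:ℝ) < t ^ (a - b - 1) := Real.rpow_pos_of_pos ht _
  have hrpP : (0:ℝ) < t ^ (P t - 1) := Real.rpow_pos_of_pos ht _
  have hrp2 : (0:ℝ) ≤ t ^ (a + b - 1) := (Real.rpow_pos_of_pos ht _).le
  refine ⟨by positivity, ?_, ?_⟩
  · -- lower bound
    rcases le_or_gt t 1 with h1 | h1
    · -- here P t - 1 = a - b - 1
      have hφt : φ t = 3 * π / 2 := by rw [hφ t, if_pos h1]
      have hPt : P t = a - b := by
        simp only [hPdef, hφt]
        rw [show (3:ℝ) * π / 2 = π + π / 2 by ring, Real.sin_add]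
        simp
        ring
      have hQ0 : Q = 0 := by
        have hps : psiAux ε t = 0 := by simp [psiAux, h1]
        simp [hQdef, hXdef, hps]
      rw [hnf, hPt, hQ0, add_zero]
      have := mul_le_mul_of_nonneg_left (show a - b - 8 * b * ε ≤ a - b by linarith)
        (Real.rpow_pos_of_pos ht (a - b - 1)).le
      linarith
    · have hmono : t ^ (a - b - 1) ≤ t ^ (P t - 1) :=
        Real.rpow_le_rpow_of_exponent_le h1.le (by linarith)
      rw [hnf]
      calc (a - b - 8 * b * ε) * t ^ (a - b - 1)
          ≤ (a - b - 8 * b * ε) * t ^ (P t - 1) :=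
            mul_le_mul_of_nonneg_left hmono hpos1.le
        _ ≤ t ^ (P t - 1) * (P t + Q) := by
            have := mul_le_mul_of_nonneg_left
              (show a - b - 8 * b * ε ≤ P t + Q by linarith) hrpP.le
            linarith
  · -- upper bound
    rcases le_or_gt t 1 with h1 | h1
    · have hφt : φ t = 3 * π / 2 := by rw [hφ t, if_pos h1]
      have hPt : P t = a - b := by
        simp only [hPdef, hφt]
        rw [show (3:ℝ) * π / 2 = π + π / 2 by ring, Real.sin_add]
        simp
        ring
      rw [hnf, hPt]
      have hQ0 : Q = 0 := by
        have : psiAux ε t = 0 := by simp [psiAux, h1]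
        simp [hQdef, hXdef, this]
      rw [hQ0, add_zero]
      have h2 := mul_le_mul_of_nonneg_left (show a - b ≤ a + b + 8 * b * ε by linarith) hrp1.le
      have h3 : 0 ≤ (a + b + 8 * b * ε) * t ^ (a + b - 1) := mul_nonneg (by linarith) hrp2
      linarith
    · have hmono : t ^ (P t - 1) ≤ t ^ (a + b - 1) :=
        Real.rpow_le_rpow_of_exponent_le h1.le (by linarith)
      rw [hnf]
      calc t ^ (P t - 1) * (P t + Q)
          ≤ t ^ (a + b - 1) * (a + b + 8 * b * ε) := by
            apply mul_le_mul hmono (by linarith) (by linarith) hrp2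
        _ ≤ (a + b + 8 * b * ε) * (t ^ (a - b - 1) + t ^ (a + b - 1)) := by
            have := mul_le_mul_of_nonneg_left
              (show t ^ (a + b - 1) ≤ t ^ (a - b - 1) + t ^ (a + b - 1) by linarith)
              (show (0:ℝ) ≤ a + b + 8 * b * ε by linarith)
            linarith
end

section
/- Let a, b > 0 with a − b > 1, let 0 < ε < min{1, (a−1−b)/(224b)}, let φ(t) = 3π/2 for t ≤ 1 and φ(t) = 3π/2 + ε·ln(ln(e + (t−1)⁴)) for t > 1, and let g(t) = t^(a + b·sin(φ(t))) for t > 0, g(0) = 0. Then for every t > 0: 0 < (a − 1 − b − 224bε)·g'(t)/t ≤ g''(t) ≤ (a − 1 + b + 224bε)·g'(t)/t. In particular g''(t) > 0 for every t > 0. -/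
open Real


noncomputable def aE (t : ℝ) : ℝ := Real.exp 1 + (t - 1) ^ 4
noncomputable def aL (t : ℝ) : ℝ := Real.log (aE t)
noncomputable def aP (t : ℝ) : ℝ := Real.log (aL t)
noncomputable def aP1 (t : ℝ) : ℝ := 4 * (t - 1) ^ 3 / (aE t * aL t)
noncomputable def aP2 (t : ℝ) : ℝ :=
  12 * (t - 1) ^ 2 / (aE t * aL t) - 16 * (t - 1) ^ 6 / ((aE t) ^ 2 * aL t)
    - 16 * (t - 1) ^ 6 / ((aE t) ^ 2 * (aL t) ^ 2)

lemma aE_ge (t : ℝ) : Real.exp 1 ≤ aE t := le_add_of_nonneg_right (by positivity)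

lemma aE_pos (t : ℝ) : 0 < aE t := lt_of_lt_of_le (Real.exp_pos 1) (aE_ge t)

lemma aL_ge_one (t : ℝ) : 1 ≤ aL t := by
  have := Real.log_le_log (Real.exp_pos 1) (aE_ge t)
  rwa [Real.log_exp] at this

lemma aL_pos (t : ℝ) : 0 < aL t := lt_of_lt_of_le one_pos (aL_ge_one t)

lemma aP_nonneg (t : ℝ) : 0 ≤ aP t := Real.log_nonneg (aL_ge_one t)

lemma hasDerivAt_aE (t : ℝ) : HasDerivAt aE (4 * (t - 1) ^ 3) t := by
  have h : HasDerivAt (fun x : ℝ => Real.exp 1 + (x - 1) ^ 4)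
      ((4 : ℕ) * (t - 1) ^ (4 - 1) * 1) t :=
    (((hasDerivAt_id t).sub_const 1).pow 4).const_add _
  exact h.congr_deriv (by norm_num)

lemma hasDerivAt_aL (t : ℝ) : HasDerivAt aL (4 * (t - 1) ^ 3 / aE t) t :=
  (hasDerivAt_aE t).log (aE_pos t).ne'

lemma hasDerivAt_aP (t : ℝ) : HasDerivAt aP (aP1 t) t := by
  have h := (hasDerivAt_aL t).log (aL_pos t).ne'
  have : 4 * (t - 1) ^ 3 / aE t / aL t = aP1 t := by
    rw [aP1, div_div]
  rwa [this] at h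

lemma hasDerivAt_aP1 (t : ℝ) : HasDerivAt aP1 (aP2 t) t := by
  have hnum : HasDerivAt (fun x : ℝ => 4 * (x - 1) ^ 3) (12 * (t - 1) ^ 2) t := by
    have h : HasDerivAt (fun x : ℝ => (x - 1) ^ 3) ((3 : ℕ) * (t - 1) ^ (3 - 1) * 1) t :=
      ((hasDerivAt_id t).sub_const 1).pow 3
    have := h.const_mul (4 : ℝ)
    exact this.congr_deriv (by ring)
  have hden : HasDerivAt (fun x => aE x * aL x)
      (4 * (t - 1) ^ 3 * aL t + aE t * (4 * (t - 1) ^ 3 / aE t)) t :=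
    (hasDerivAt_aE t).mul (hasDerivAt_aL t)
  have hdne : aE t * aL t ≠ 0 := (mul_pos (aE_pos t) (aL_pos t)).ne'
  have h := hnum.div hden hdne
  have heq : (12 * (t - 1) ^ 2 * (aE t * aL t) -
      4 * (t - 1) ^ 3 * (4 * (t - 1) ^ 3 * aL t + aE t * (4 * (t - 1) ^ 3 / aE t))) /
      (aE t * aL t) ^ 2 = aP2 t := by
    rw [aP2]
    have h1 : aE t ≠ 0 := (aE_pos t).ne'
    have h2 : aL t ≠ 0 := (aL_pos t).ne'
    field_simp
    ring
  rwa [heq] at h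
noncomputable def hh (a b ε t : ℝ) : ℝ := a + b * Real.sin (3 * π / 2 + ε * aP t)
noncomputable def hh1 (b ε t : ℝ) : ℝ := b * (Real.cos (3 * π / 2 + ε * aP t) * (ε * aP1 t))
noncomputable def hh2 (b ε t : ℝ) : ℝ :=
  b * (-Real.sin (3 * π / 2 + ε * aP t) * (ε * aP1 t) ^ 2
      + Real.cos (3 * π / 2 + ε * aP t) * (ε * aP2 t))

lemma hasDerivAt_theta (ε t : ℝ) :
    HasDerivAt (fun x => 3 * π / 2 + ε * aP x) (ε * aP1 t) t :=
  ((hasDerivAt_aP t).const_mul ε).const_add _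

lemma hasDerivAt_hh (a b ε t : ℝ) : HasDerivAt (hh a b ε) (hh1 b ε t) t := by
  unfold hh hh1
  have h := (((hasDerivAt_theta ε t).sin).const_mul b).const_add a
  exact h

lemma hasDerivAt_hh1 (b ε t : ℝ) : HasDerivAt (hh1 b ε) (hh2 b ε t) t := by
  have hc : HasDerivAt (fun x => Real.cos (3 * π / 2 + ε * aP x))
      (-Real.sin (3 * π / 2 + ε * aP t) * (ε * aP1 t)) t := (hasDerivAt_theta ε t).cos
  have hp : HasDerivAt (fun x => ε * aP1 x) (ε * aP2 t) t := (hasDerivAt_aP1 t).const_mul ε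
  have h := (hc.mul hp).const_mul b
  have heq : b * (-Real.sin (3 * π / 2 + ε * aP t) * (ε * aP1 t) * (ε * aP1 t)
      + Real.cos (3 * π / 2 + ε * aP t) * (ε * aP2 t)) = hh2 b ε t := by
    rw [hh2]; ring
  rwa [heq] at h

noncomputable def gp (a b ε t : ℝ) : ℝ := Real.exp (hh a b ε t * Real.log t)
noncomputable def uu (a b ε t : ℝ) : ℝ := hh1 b ε t * Real.log t + hh a b ε t / t
noncomputable def gp1 (a b ε t : ℝ) : ℝ := gp a b ε t * uu a b ε t
noncomputable def gp2 (a b ε t : ℝ) : ℝ :=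
  gp a b ε t * ((uu a b ε t) ^ 2
    + (hh2 b ε t * Real.log t + 2 * hh1 b ε t / t - hh a b ε t / t ^ 2))

lemma gp_pos (a b ε t : ℝ) : 0 < gp a b ε t := Real.exp_pos _

lemma hasDerivAt_inner (a b ε : ℝ) {t : ℝ} (ht : t ≠ 0) :
    HasDerivAt (fun x => hh a b ε x * Real.log x) (uu a b ε t) t := by
  have h := (hasDerivAt_hh a b ε t).mul (Real.hasDerivAt_log ht)
  have : hh1 b ε t * Real.log t + hh a b ε t * t⁻¹ = uu a b ε t := by
    rw [uu, div_eq_mul_inv]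
  rwa [this] at h

lemma hasDerivAt_gp (a b ε : ℝ) {t : ℝ} (ht : t ≠ 0) :
    HasDerivAt (gp a b ε) (gp1 a b ε t) t := by
  have h := (hasDerivAt_inner a b ε ht).exp
  unfold gp
  simpa [gp, gp1, mul_comm] using h

lemma hasDerivAt_uu (a b ε : ℝ) {t : ℝ} (ht : t ≠ 0) :
    HasDerivAt (uu a b ε)
      (hh2 b ε t * Real.log t + hh1 b ε t / t + (hh1 b ε t / t - hh a b ε t / t ^ 2)) t := by
  have h1 : HasDerivAt (fun x => hh1 b ε x * Real.log x)
      (hh2 b ε t * Real.log t + hh1 b ε t * t⁻¹) t :=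
    (hasDerivAt_hh1 b ε t).mul (Real.hasDerivAt_log ht)
  have h2 : HasDerivAt (fun x => hh a b ε x / x)
      ((hh1 b ε t * t - hh a b ε t * 1) / t ^ 2) t :=
    (hasDerivAt_hh a b ε t).div (hasDerivAt_id t) ht
  have h := h1.add h2
  have heq : hh2 b ε t * Real.log t + hh1 b ε t * t⁻¹
      + (hh1 b ε t * t - hh a b ε t * 1) / t ^ 2
      = hh2 b ε t * Real.log t + hh1 b ε t / t + (hh1 b ε t / t - hh a b ε t / t ^ 2) := by
    field_simp
  rwa [heq] at h

lemma hasDerivAt_gp1 (a b ε : ℝ) {t : ℝ} (ht : t ≠ 0) :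
    HasDerivAt (gp1 a b ε) (gp2 a b ε t) t := by
  have h := (hasDerivAt_gp a b ε ht).mul (hasDerivAt_uu a b ε ht)
  have heq : gp1 a b ε t * uu a b ε t
      + gp a b ε t * (hh2 b ε t * Real.log t + hh1 b ε t / t
        + (hh1 b ε t / t - hh a b ε t / t ^ 2)) = gp2 a b ε t := by
    rw [gp1, gp2]; ring
  rwa [heq] at h
lemma sin_3pi2 : Real.sin (3 * π / 2) = -1 := by
  rw [show (3:ℝ) * π / 2 = π / 2 + π by ring, Real.sin_add_pi, Real.sin_pi_div_two]

lemma cos_3pi2 : Real.cos (3 * π / 2) = 0 := by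
  rw [show (3:ℝ) * π / 2 = π / 2 + π by ring, Real.cos_add_pi, Real.cos_pi_div_two, neg_zero]

lemma aP_one : aP 1 = 0 := by
  rw [aP, aL, aE]; norm_num [Real.log_exp]

lemma aP1_one : aP1 1 = 0 := by rw [aP1]; norm_num

lemma aP2_one : aP2 1 = 0 := by rw [aP2]; norm_num

lemma hh_one (a b ε : ℝ) : hh a b ε 1 = a - b := by
  rw [hh, aP_one]; norm_num [sin_3pi2]; ring

lemma hh1_one (b ε : ℝ) : hh1 b ε 1 = 0 := by
  rw [hh1, aP1_one]; norm_num

lemma hh2_one (b ε : ℝ) : hh2 b ε 1 = 0 := by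
  rw [hh2, aP_one, aP1_one, aP2_one]; norm_num [cos_3pi2]

lemma gp_one (a b ε : ℝ) : gp a b ε 1 = 1 := by
  rw [gp]; norm_num

lemma uu_one (a b ε : ℝ) : uu a b ε 1 = a - b := by
  rw [uu, hh_one, hh1_one]; norm_num

lemma gp1_one (a b ε : ℝ) : gp1 a b ε 1 = a - b := by
  rw [gp1, gp_one, uu_one]; norm_num

lemma gp2_one (a b ε : ℝ) : gp2 a b ε 1 = (a - b) * (a - b - 1) := by
  rw [gp2, gp_one, uu_one, hh_one, hh1_one, hh2_one]; norm_num; ring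

noncomputable def Gd (a b ε t : ℝ) : ℝ :=
  if t ≤ 1 then (a - b) * t ^ (a - b - 1) else gp1 a b ε t

noncomputable def Gd2 (a b ε t : ℝ) : ℝ :=
  if t ≤ 1 then (a - b) * (a - b - 1) * t ^ (a - b - 2) else gp2 a b ε t

section glue

variable {a b ε : ℝ} {φ g : ℝ → ℝ}
variable (hφ : ∀ t : ℝ, φ t = if t ≤ 1 then 3 * π / 2
      else 3 * π / 2 + ε * Real.log (Real.log (Real.exp 1 + (t - 1) ^ 4)))
variable (hg : ∀ t : ℝ, 0 < t → g t = t ^ (a + b * Real.sin (φ t)))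

include hφ hg

lemma g_eq_gm {x : ℝ} (hx0 : 0 < x) (hx1 : x ≤ 1) : g x = x ^ (a - b) := by
  rw [hg x hx0, hφ x, if_pos hx1, sin_3pi2]
  norm_num
  rw [show a + -b = a - b by ring]

lemma g_eq_gp {x : ℝ} (hx : 1 ≤ x) : g x = gp a b ε x := by
  rcases eq_or_lt_of_le hx with h | h
  · rw [← h, hg 1 one_pos, gp_one, Real.one_rpow]
  · rw [hg x (lt_trans one_pos h), hφ x, if_neg (not_le.mpr h), gp,
      Real.rpow_def_of_pos (lt_trans one_pos h), hh, aP, aL, aE]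
    ring_nf

lemma key1 : ∀ t : ℝ, 0 < t → HasDerivAt g (Gd a b ε t) t := by
  intro t ht
  rcases lt_trichotomy t 1 with h1 | h1 | h1
  · -- t < 1
    have hev : g =ᶠ[nhds t] fun x => x ^ (a - b) := by
      filter_upwards [Ioo_mem_nhds ht h1] with x hx
      exact g_eq_gm hφ hg hx.1 (le_of_lt hx.2)
    have hd : HasDerivAt (fun x : ℝ => x ^ (a - b)) ((a - b) * t ^ (a - b - 1)) t :=
      Real.hasDerivAt_rpow_const (Or.inl ht.ne')
    rw [Gd, if_pos (le_of_lt h1)]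
    exact hd.congr_of_eventuallyEq hev
  · -- t = 1
    subst h1
    have hleft : HasDerivWithinAt g (a - b) (Set.Iic 1) 1 := by
      have hd : HasDerivAt (fun x : ℝ => x ^ (a - b)) ((a - b) * (1:ℝ) ^ (a - b - 1)) 1 :=
        Real.hasDerivAt_rpow_const (Or.inl one_ne_zero)
      rw [Real.one_rpow, mul_one] at hd
      refine hd.hasDerivWithinAt.congr_of_eventuallyEq ?_ ?_
      · filter_upwards [mem_nhdsWithin_of_mem_nhds (Ioi_mem_nhds (by norm_num : (0:ℝ) < 1)),
          self_mem_nhdsWithin] with x hx0 hx1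
        exact g_eq_gm hφ hg hx0 hx1
      · rw [g_eq_gm hφ hg one_pos le_rfl]
    have hright : HasDerivWithinAt g (a - b) (Set.Ici 1) 1 := by
      have hd := (hasDerivAt_gp a b ε one_ne_zero).hasDerivWithinAt (s := Set.Ici 1)
      rw [gp1_one] at hd
      exact hd.congr (fun x hx => g_eq_gp hφ hg hx) (g_eq_gp hφ hg le_rfl)
    have := (hleft.union hright)
    rw [Set.Iic_union_Ici] at this
    rw [Gd, if_pos le_rfl, Real.one_rpow, mul_one]
    exact hasDerivWithinAt_univ.mp this
  · -- 1 < t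
    have hev : g =ᶠ[nhds t] gp a b ε := by
      filter_upwards [Ioi_mem_nhds h1] with x hx
      exact g_eq_gp hφ hg (le_of_lt hx)
    rw [Gd, if_neg (not_le.mpr h1)]
    exact (hasDerivAt_gp a b ε ht.ne').congr_of_eventuallyEq hev

end glue
lemma key2 (a b ε : ℝ) : ∀ t : ℝ, 0 < t → HasDerivAt (Gd a b ε) (Gd2 a b ε t) t := by
  intro t ht
  have hm : ∀ x : ℝ, x ≠ 0 → HasDerivAt (fun y : ℝ => (a - b) * y ^ (a - b - 1))
      ((a - b) * (a - b - 1) * x ^ (a - b - 2)) x := by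
    intro x hx
    have hd := (Real.hasDerivAt_rpow_const (p := a - b - 1) (Or.inl hx)).const_mul (a - b)
    rw [show a - b - 1 - 1 = a - b - 2 by ring] at hd
    exact hd.congr_deriv (by ring)
  rcases lt_trichotomy t 1 with h1 | h1 | h1
  · have hev : Gd a b ε =ᶠ[nhds t] fun x => (a - b) * x ^ (a - b - 1) := by
      filter_upwards [Iio_mem_nhds h1] with x hx
      rw [Gd, if_pos (le_of_lt hx)]
    rw [Gd2, if_pos (le_of_lt h1)]
    exact (hm t ht.ne').congr_of_eventuallyEq hev
  · subst h1
    have hleft : HasDerivWithinAt (Gd a b ε) ((a - b) * (a - b - 1)) (Set.Iic 1) 1 := by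
      have hd := ((hm 1 one_ne_zero).hasDerivWithinAt (s := Set.Iic 1))
      rw [Real.one_rpow, mul_one] at hd
      exact hd.congr (fun x hx => by have hx' : x ≤ 1 := hx; rw [Gd, if_pos hx']) (by rw [Gd, if_pos le_rfl])
    have hright : HasDerivWithinAt (Gd a b ε) ((a - b) * (a - b - 1)) (Set.Ici 1) 1 := by
      have hd := (hasDerivAt_gp1 a b ε one_ne_zero).hasDerivWithinAt (s := Set.Ici 1)
      rw [gp2_one] at hd
      refine hd.congr (fun x hx => ?_) ?_
      · rcases eq_or_lt_of_le (Set.mem_Ici.mp hx) with h | h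
        · rw [← h, Gd, if_pos le_rfl, Real.one_rpow, mul_one, gp1_one]
        · rw [Gd, if_neg (not_le.mpr h)]
      · rw [Gd, if_pos le_rfl, Real.one_rpow, mul_one, gp1_one]
    have hu := hleft.union hright
    rw [Set.Iic_union_Ici] at hu
    rw [Gd2, if_pos le_rfl, Real.one_rpow, mul_one]
    exact hasDerivWithinAt_univ.mp hu
  · have hev : Gd a b ε =ᶠ[nhds t] gp1 a b ε := by
      filter_upwards [Ioi_mem_nhds h1] with x hx
      rw [Gd, if_neg (not_le.mpr hx)]
    rw [Gd2, if_neg (not_le.mpr h1)]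
    exact (hasDerivAt_gp1 a b ε ht.ne').congr_of_eventuallyEq hev
section bounds

variable {t : ℝ}

lemma bd_LL (ht : 1 < t) : 3 * Real.log t ≤ 2 * aL t := by
  have hs : 0 < t - 1 := by linarith
  have he := Real.exp_one_gt_d9
  have h : t ^ 3 ≤ (aE t) ^ 2 := by
    rw [aE]
    nlinarith [sq_nonneg ((t-1)^2-1), sq_nonneg ((t-1)-1), sq_nonneg ((t-1)^2-(t-1)),
      sq_nonneg ((t-1)^4-1), sq_nonneg ((t-1)^3-1), sq_nonneg ((t-1)^2+(t-1)),
      sq_nonneg ((t-1)^4-(t-1)), pow_pos hs 4]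
  have hlog := Real.log_le_log (pow_pos (by linarith : (0:ℝ) < t) 3) h
  rw [Real.log_pow, Real.log_pow] at hlog
  have : aL t = Real.log (aE t) := rfl
  push_cast at hlog
  linarith [hlog]

lemma EL_pos (t : ℝ) : 0 < aE t * aL t := mul_pos (aE_pos t) (aL_pos t)

lemma bd_core (ht : 1 < t) : 4 * (t - 1) ^ 3 * t ≤ 8 * aE t := by
  have hs : 0 < t - 1 := by linarith
  have he := Real.exp_one_gt_d9
  rw [aE]
  nlinarith [sq_nonneg ((t-1)^2-(t-1)), sq_nonneg ((t-1)-1), sq_nonneg (t-1)]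

lemma aP1_nonneg (ht : 1 < t) : 0 ≤ aP1 t := by
  rw [aP1]
  have hs : 0 < t - 1 := by linarith
  exact div_nonneg (by nlinarith [pow_pos hs 3]) (EL_pos t).le

lemma bd_tP (ht : 1 < t) : t * aP1 t ≤ 8 := by
  rw [aP1, show t * (4 * (t-1)^3 / (aE t * aL t)) = (4 * (t-1)^3 * t) / (aE t * aL t) by ring,
    div_le_iff₀ (EL_pos t)]
  nlinarith [bd_core ht, aE_pos t, aL_ge_one t]

lemma bd_tPL (ht : 1 < t) : t * aP1 t * Real.log t ≤ 16 / 3 := by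
  have hL : 0 ≤ Real.log t := (Real.log_pos ht).le
  rw [aP1, show t * (4 * (t-1)^3 / (aE t * aL t)) * Real.log t
      = (4 * (t-1)^3 * t * Real.log t) / (aE t * aL t) by ring,
    div_le_iff₀ (EL_pos t)]
  nlinarith [mul_nonneg (sub_nonneg.mpr (bd_core ht)) hL,
    mul_nonneg (aE_pos t).le (sub_nonneg.mpr (bd_LL ht))]

lemma bd_t2P2L (ht : 1 < t) : t ^ 2 * (aP1 t) ^ 2 * Real.log t ≤ 128 / 3 := by
  have h1 := bd_tP ht
  have h2 := bd_tPL ht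
  have h3 : 0 ≤ t * aP1 t * Real.log t :=
    mul_nonneg (mul_nonneg (by linarith) (aP1_nonneg ht)) (Real.log_pos ht).le
  have := mul_le_mul h1 h2 h3 (by norm_num : (0:ℝ) ≤ 8)
  nlinarith [this]

set_option maxHeartbeats 1000000 in
lemma bd_t2P2Labs (ht : 1 < t) : t ^ 2 * |aP2 t| * Real.log t ≤ 352 / 3 := by
  have hs : 0 < t - 1 := by linarith
  have ht0 : 0 < t := by linarith
  have hL : 0 ≤ Real.log t := (Real.log_pos ht).le
  have hE := aE_pos t
  have hΛ := aL_ge_one t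
  have hΛ0 := aL_pos t
  have he := Real.exp_one_gt_d9
  set A := 12 * (t-1)^2 / (aE t * aL t) with hA
  set B := 16 * (t-1)^6 / ((aE t)^2 * aL t) with hB
  set C := 16 * (t-1)^6 / ((aE t)^2 * (aL t)^2) with hC
  have hAn : 0 ≤ A := by rw [hA]; positivity
  have hBn : 0 ≤ B := by rw [hB]; positivity
  have hCn : 0 ≤ C := by rw [hC]; positivity
  have habs : |aP2 t| ≤ A + B + C := by
    rw [aP2, ← hA, ← hB, ← hC]
    rw [abs_le]
    constructor <;> linarith
  have hbound : t ^ 2 * (A + B + C) * Real.log t ≤ 352 / 3 := by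
    have hA' : t ^ 2 * A * Real.log t ≤ 32 := by
      rw [hA, show t^2 * (12 * (t-1)^2 / (aE t * aL t)) * Real.log t
          = (12 * (t-1)^2 * t^2 * Real.log t) / (aE t * aL t) by ring,
        div_le_iff₀ (EL_pos t)]
      have hp3 : 12 * (t-1)^2 * t^2 ≤ 48 * aE t := by
        rw [aE]; nlinarith [sq_nonneg ((t-1)^2-(t-1)), sq_nonneg ((t-1)-1),
          sq_nonneg ((t-1)^2-1), sq_nonneg (t-1)]
      nlinarith [mul_nonneg (sub_nonneg.mpr hp3) hL,
        mul_nonneg hE.le (sub_nonneg.mpr (bd_LL ht))]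
    have hp4 : 16 * (t-1)^6 * t^2 ≤ 64 * (aE t)^2 := by
      rw [aE]; nlinarith [sq_nonneg ((t-1)^3-(t-1)), sq_nonneg ((t-1)^4-(t-1)^3),
        sq_nonneg ((t-1)^4-1), sq_nonneg ((t-1)^3-1), pow_pos hs 4,
        sq_nonneg ((t-1)^4-(t-1)), sq_nonneg ((t-1)^4-(t-1)^2)]
    have hE2 : 0 < (aE t)^2 * aL t := mul_pos (pow_pos hE 2) hΛ0
    have hB' : t ^ 2 * B * Real.log t ≤ 128 / 3 := by
      rw [hB, show t^2 * (16 * (t-1)^6 / ((aE t)^2 * aL t)) * Real.log t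
          = (16 * (t-1)^6 * t^2 * Real.log t) / ((aE t)^2 * aL t) by ring,
        div_le_iff₀ hE2]
      nlinarith [mul_nonneg (sub_nonneg.mpr hp4) hL,
        mul_nonneg (mul_pos hE hE).le (sub_nonneg.mpr (bd_LL ht))]
    have hE3 : 0 < (aE t)^2 * (aL t)^2 := mul_pos (pow_pos hE 2) (pow_pos hΛ0 2)
    have hCB : C ≤ B := by
      rw [hC, hB]
      apply div_le_div_of_nonneg_left (by nlinarith [pow_pos hs 6]) hE2
      nlinarith [mul_pos (mul_pos hE hE) hΛ0]
    have hC' : t ^ 2 * C * Real.log t ≤ 128 / 3 := by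
      refine le_trans ?_ hB'
      apply mul_le_mul_of_nonneg_right _ hL
      exact mul_le_mul_of_nonneg_left hCB (by nlinarith)
    have hsplit : t ^ 2 * (A + B + C) * Real.log t
        = t ^ 2 * A * Real.log t + t ^ 2 * B * Real.log t + t ^ 2 * C * Real.log t := by ring
    rw [hsplit]; linarith
  calc t ^ 2 * |aP2 t| * Real.log t ≤ t ^ 2 * (A + B + C) * Real.log t := by
        apply mul_le_mul_of_nonneg_right _ hL
        exact mul_le_mul_of_nonneg_left habs (by nlinarith)
    _ ≤ 352 / 3 := hbound

end bounds
set_option maxHeartbeats 1600000 in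
lemma est_core (a b ε t L P Q σ c : ℝ)
    (hb : 0 < b) (hε : 0 < ε) (hε1 : ε ≤ 1)
    (hab : 1 < a - b) (hε2 : 224 * (b * ε) < a - 1 - b)
    (ht : 1 < t) (hL : 0 < L) (hP0 : 0 ≤ P)
    (hσ1 : -1 ≤ σ) (hσ2 : σ ≤ 1) (hc1 : -1 ≤ c) (hc2 : c ≤ 1)
    (hT1 : t * P * L ≤ 16 / 3) (hT2 : t ^ 2 * P ^ 2 * L ≤ 128 / 3) (hT4 : t * P ≤ 8)
    (hS1 : t ^ 2 * Q * L ≤ 352 / 3) (hS2 : -(352 / 3) ≤ t ^ 2 * Q * L) :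
    1 ≤ t * (b * (c * (ε * P))) * L + (a + b * σ) ∧
    (a - 1 - b - 224 * b * ε) * (t * (b * (c * (ε * P))) * L + (a + b * σ)) ≤
      (t * (b * (c * (ε * P))) * L + (a + b * σ)) ^ 2
        + (t ^ 2 * (b * (-σ * (ε * P) ^ 2 + c * (ε * Q))) * L
            + 2 * (t * (b * (c * (ε * P)))) - (a + b * σ)) ∧
    (t * (b * (c * (ε * P))) * L + (a + b * σ)) ^ 2
        + (t ^ 2 * (b * (-σ * (ε * P) ^ 2 + c * (ε * Q))) * L
            + 2 * (t * (b * (c * (ε * P)))) - (a + b * σ)) ≤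
      (a - 1 + b + 224 * b * ε) * (t * (b * (c * (ε * P))) * L + (a + b * σ)) := by
  have ht0 : (0:ℝ) < t := by linarith
  have hq0 : (0:ℝ) ≤ b * ε := by positivity
  have hT1n : 0 ≤ t * P * L := mul_nonneg (mul_nonneg ht0.le hP0) hL.le
  have hT2n : 0 ≤ t ^ 2 * P ^ 2 * L := by positivity
  have hT4n : 0 ≤ t * P := mul_nonneg ht0.le hP0
  -- A1 = t * h1 * L
  have hA1u : t * (b * (c * (ε * P))) * L ≤ 16 / 3 * (b * ε) := by
    nlinarith [mul_nonneg hq0 (mul_nonneg (sub_nonneg.mpr hc2) hT1n),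
      mul_nonneg hq0 (sub_nonneg.mpr hT1)]
  have hA1l : -(16 / 3 * (b * ε)) ≤ t * (b * (c * (ε * P))) * L := by
    nlinarith [mul_nonneg hq0 (mul_nonneg (by linarith : (0:ℝ) ≤ 1 + c) hT1n),
      mul_nonneg hq0 (sub_nonneg.mpr hT1)]
  -- A3 = t * h1 * (2 + L)
  have hVu : 2 * (t * P) + t * P * L ≤ 64 / 3 := by linarith
  have hVn : 0 ≤ 2 * (t * P) + t * P * L := by linarith
  have hA3u : t * (b * (c * (ε * P))) * (2 + L) ≤ 64 / 3 * (b * ε) := by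
    nlinarith [mul_nonneg hq0 (mul_nonneg (sub_nonneg.mpr hc2) hVn),
      mul_nonneg hq0 (sub_nonneg.mpr hVu)]
  have hA3l : -(64 / 3 * (b * ε)) ≤ t * (b * (c * (ε * P))) * (2 + L) := by
    nlinarith [mul_nonneg hq0 (mul_nonneg (by linarith : (0:ℝ) ≤ 1 + c) hVn),
      mul_nonneg hq0 (sub_nonneg.mpr hVu)]
  -- A2 = t^2 * h2 * L
  have hA2u : t ^ 2 * (b * (-σ * (ε * P) ^ 2 + c * (ε * Q))) * L ≤ 160 * (b * ε) := by
    nlinarith [mul_nonneg (mul_nonneg hq0 hε.le) (mul_nonneg (by linarith : (0:ℝ) ≤ 1 + σ) hT2n),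
      mul_nonneg (mul_nonneg hq0 hT2n) (sub_nonneg.mpr hε1),
      mul_nonneg hq0 (sub_nonneg.mpr hT2),
      mul_nonneg hq0 (mul_nonneg (sub_nonneg.mpr hc2) (by linarith : (0:ℝ) ≤ 352 / 3 + t ^ 2 * Q * L)),
      mul_nonneg hq0 (mul_nonneg (by linarith : (0:ℝ) ≤ 1 + c) (sub_nonneg.mpr hS1))]
  have hA2l : -(160 * (b * ε)) ≤ t ^ 2 * (b * (-σ * (ε * P) ^ 2 + c * (ε * Q))) * L := by
    nlinarith [mul_nonneg (mul_nonneg hq0 hε.le) (mul_nonneg (sub_nonneg.mpr hσ2) hT2n),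
      mul_nonneg (mul_nonneg hq0 hT2n) (sub_nonneg.mpr hε1),
      mul_nonneg hq0 (sub_nonneg.mpr hT2),
      mul_nonneg hq0 (mul_nonneg (sub_nonneg.mpr hc2) (sub_nonneg.mpr hS1)),
      mul_nonneg hq0 (mul_nonneg (by linarith : (0:ℝ) ≤ 1 + c) (by linarith : (0:ℝ) ≤ 352 / 3 + t ^ 2 * Q * L))]
  -- X bounds
  have hX1 : 1 ≤ t * (b * (c * (ε * P))) * L + (a + b * σ) := by
    nlinarith [mul_nonneg hb.le (by linarith : (0:ℝ) ≤ 1 + σ)]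
  have hX0 : 0 ≤ t * (b * (c * (ε * P))) * L + (a + b * σ) := by linarith
  refine ⟨hX1, ?_, ?_⟩
  · nlinarith [mul_le_mul_of_nonneg_right hA1l hX0,
      mul_nonneg hq0 (by linarith : (0:ℝ) ≤ t * (b * (c * (ε * P))) * L + (a + b * σ) - 1),
      mul_le_mul_of_nonneg_right
        (by nlinarith [mul_nonneg hb.le (by linarith : (0:ℝ) ≤ 1 + σ)] :
          a - 1 - b ≤ a + b * σ - 1) hX0]
  · nlinarith [mul_le_mul_of_nonneg_right hA1u hX0,
      mul_nonneg hq0 (by linarith : (0:ℝ) ≤ t * (b * (c * (ε * P))) * L + (a + b * σ) - 1),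
      mul_le_mul_of_nonneg_right
        (by nlinarith [mul_nonneg hb.le (sub_nonneg.mpr hσ2)] :
          a + b * σ - 1 ≤ a - 1 + b) hX0]
lemma main_est (a b ε : ℝ) (hb : 0 < b) (hε : 0 < ε) (hε1 : ε ≤ 1)
    (hab : 1 < a - b) (hε2 : 224 * (b * ε) < a - 1 - b) {t : ℝ} (ht : 1 < t) :
    0 < gp1 a b ε t / t ∧
    (a - 1 - b - 224 * b * ε) * (gp1 a b ε t / t) ≤ gp2 a b ε t ∧
    gp2 a b ε t ≤ (a - 1 + b + 224 * b * ε) * (gp1 a b ε t / t) := by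
  have ht0 : (0:ℝ) < t := by linarith
  have ht0' : t ≠ 0 := ht0.ne'
  have hL := Real.log_pos ht
  have ht2L : (0:ℝ) ≤ t ^ 2 * Real.log t := by positivity
  have hS1 : t ^ 2 * aP2 t * Real.log t ≤ 352 / 3 := by
    nlinarith [bd_t2P2Labs ht,
      mul_nonneg (sub_nonneg.mpr (le_abs_self (aP2 t))) ht2L]
  have hS2 : -(352 / 3) ≤ t ^ 2 * aP2 t * Real.log t := by
    nlinarith [bd_t2P2Labs ht,
      mul_nonneg (by linarith [neg_abs_le (aP2 t)] : (0:ℝ) ≤ aP2 t + |aP2 t|) ht2L]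
  obtain ⟨hX1, hlow, hhigh⟩ := est_core a b ε t (Real.log t) (aP1 t) (aP2 t)
    (Real.sin (3 * π / 2 + ε * aP t)) (Real.cos (3 * π / 2 + ε * aP t)) hb hε hε1 hab hε2
    ht hL (aP1_nonneg ht) (Real.neg_one_le_sin _) (Real.sin_le_one _)
    (Real.neg_one_le_cos _) (Real.cos_le_one _) (bd_tPL ht) (bd_t2P2L ht) (bd_tP ht) hS1 hS2
  have euu : t * uu a b ε t
      = t * (b * (Real.cos (3 * π / 2 + ε * aP t) * (ε * aP1 t))) * Real.log t
        + (a + b * Real.sin (3 * π / 2 + ε * aP t)) := by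
    rw [uu, hh1, hh]; field_simp
  have eW : t ^ 2 * (hh2 b ε t * Real.log t + 2 * hh1 b ε t / t - hh a b ε t / t ^ 2)
      = t ^ 2 * (b * (-Real.sin (3 * π / 2 + ε * aP t) * (ε * aP1 t) ^ 2
            + Real.cos (3 * π / 2 + ε * aP t) * (ε * aP2 t))) * Real.log t
        + 2 * (t * (b * (Real.cos (3 * π / 2 + ε * aP t) * (ε * aP1 t))))
        - (a + b * Real.sin (3 * π / 2 + ε * aP t)) := by
    rw [hh2, hh1, hh]; field_simp
  have htu : 1 ≤ t * uu a b ε t := by rw [euu]; exact hX1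
  have hu_pos : 0 < uu a b ε t := by nlinarith
  have hgp := gp_pos a b ε t
  have hY : 0 < gp a b ε t / t ^ 2 := div_pos hgp (pow_pos ht0 2)
  have e1 : gp1 a b ε t / t = t * uu a b ε t * (gp a b ε t / t ^ 2) := by
    rw [gp1]; field_simp
  have e2 : gp2 a b ε t = ((t * uu a b ε t) ^ 2
      + t ^ 2 * (hh2 b ε t * Real.log t + 2 * hh1 b ε t / t - hh a b ε t / t ^ 2))
      * (gp a b ε t / t ^ 2) := by
    rw [gp2]; field_simp
  refine ⟨by rw [e1]; positivity, ?_, ?_⟩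
  · rw [e1, e2, ← mul_assoc]
    apply mul_le_mul_of_nonneg_right _ hY.le
    rw [euu, eW]
    exact hlow
  · rw [e1, e2, ← mul_assoc]
    apply mul_le_mul_of_nonneg_right _ hY.le
    rw [euu, eW]
    exact hhigh

theorem g_second_deriv_estimate (a b ε : ℝ) (ha : 0 < a) (hb : 0 < b)
    (hab : 1 < a - b) (hε : 0 < ε) (hε' : ε < min 1 ((a - 1 - b) / (224 * b)))
    (φ : ℝ → ℝ)
    (hφ : ∀ t : ℝ, φ t = if t ≤ 1 then 3 * π / 2
      else 3 * π / 2 + ε * Real.log (Real.log (Real.exp 1 + (t - 1) ^ 4)))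
    (g : ℝ → ℝ) (hg0 : g 0 = 0)
    (hg : ∀ t : ℝ, 0 < t → g t = t ^ (a + b * Real.sin (φ t))) :
    (∀ t : ℝ, 0 < t →
      0 < (a - 1 - b - 224 * b * ε) * (deriv g t / t) ∧
      (a - 1 - b - 224 * b * ε) * (deriv g t / t) ≤ deriv (deriv g) t ∧
      deriv (deriv g) t ≤ (a - 1 + b + 224 * b * ε) * (deriv g t / t)) ∧
    (∀ t : ℝ, 0 < t → 0 < deriv (deriv g) t) := by
  have hε1 : ε ≤ 1 := le_of_lt (lt_of_lt_of_le hε' (min_le_left _ _))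
  have hε2 : 224 * (b * ε) < a - 1 - b := by
    have h := lt_of_lt_of_le hε' (min_le_right _ _)
    rw [lt_div_iff₀ (by positivity : (0:ℝ) < 224 * b)] at h
    nlinarith
  have hcl : 0 < a - 1 - b - 224 * b * ε := by nlinarith
  have hd1 : ∀ t : ℝ, 0 < t → deriv g t = Gd a b ε t :=
    fun t ht => (key1 hφ hg t ht).deriv
  have hdd : ∀ t : ℝ, 0 < t → deriv (deriv g) t = Gd2 a b ε t := by
    intro t ht
    have hev : deriv g =ᶠ[nhds t] Gd a b ε := by
      filter_upwards [Ioi_mem_nhds ht] with x hx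
      exact hd1 x hx
    rw [Filter.EventuallyEq.deriv_eq hev]
    exact (key2 a b ε t ht).deriv
  have hmain : ∀ t : ℝ, 0 < t →
      0 < (a - 1 - b - 224 * b * ε) * (deriv g t / t) ∧
      (a - 1 - b - 224 * b * ε) * (deriv g t / t) ≤ deriv (deriv g) t ∧
      deriv (deriv g) t ≤ (a - 1 + b + 224 * b * ε) * (deriv g t / t) := by
    intro t ht
    rw [hd1 t ht, hdd t ht]
    rcases le_or_gt t 1 with h1 | h1
    · rw [Gd, Gd2, if_pos h1, if_pos h1]
      have hr : 0 < t ^ (a - b - 1) := Real.rpow_pos_of_pos ht _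
      have hrw : t ^ (a - b - 2) = t ^ (a - b - 1) / t := by
        rw [show a - b - 2 = a - b - 1 - 1 by ring, Real.rpow_sub ht, Real.rpow_one]
      rw [hrw]
      have hz : 0 < t ^ (a - b - 1) / t := div_pos hr ht
      have e3 : (a - b) * t ^ (a - b - 1) / t = (a - b) * (t ^ (a - b - 1) / t) := by ring
      rw [e3]
      refine ⟨by positivity, ?_, ?_⟩
      · nlinarith [mul_pos hcl hz, mul_nonneg (mul_nonneg hb.le hε.le) hz.le]
      · nlinarith [mul_nonneg (mul_nonneg hb.le hε.le) hz.le, mul_pos hb hz]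
    · rw [Gd, Gd2, if_neg (not_le.mpr h1), if_neg (not_le.mpr h1)]
      obtain ⟨hp, hl, hh'⟩ := main_est a b ε hb hε hε1 hab hε2 h1
      exact ⟨mul_pos hcl hp, hl, hh'⟩
  exact ⟨hmain, fun t ht => lt_of_lt_of_le (hmain t ht).1 (hmain t ht).2.1⟩
end

section
/- Let a, b > 0 with a − b > 1, let 0 < ε < min{1, (a−1−b)/(224b)}, let φ(t) = 3π/2 for t ≤ 1 and φ(t) = 3π/2 + ε·ln(ln(e + (t−1)⁴)) for t > 1, and let g(t) = t^(a + b·sin(φ(t))) for t > 0, g(0) = 0. Then g is strictly convex on [0,∞), and its derivative g' is strictly increasing on [0,∞). -/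
open Real Filter Asymptotics Topology


lemma hasDerivAt_maxpow (n : ℕ) (hn : 2 ≤ n) (x : ℝ) :
    HasDerivAt (fun y : ℝ => (max y 0)^n) (n * (max x 0)^(n-1)) x := by
  have hn0 : n ≠ 0 := by omega
  have hn1 : n - 1 ≠ 0 := by omega
  rcases lt_trichotomy x 0 with hx | hx | hx
  · have : max x 0 = 0 := max_eq_right hx.le
    rw [this, zero_pow hn1, mul_zero]
    refine (hasDerivAt_const x (0:ℝ)).congr_of_eventuallyEq ?_
    filter_upwards [Iio_mem_nhds hx] with y hy
    simp [max_eq_right (le_of_lt (Set.mem_Iio.mp hy)), zero_pow hn0]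
  · subst hx
    have : max (0:ℝ) 0 = 0 := by simp
    rw [this, zero_pow hn1, mul_zero]
    rw [hasDerivAt_iff_isLittleO_nhds_zero]
    simp only [zero_add, max_self, zero_pow hn0, sub_zero, smul_zero]
    rw [isLittleO_iff]
    intro c hc
    filter_upwards [eventually_abs_sub_lt 0 (lt_min one_pos hc)] with h hh
    rw [sub_zero] at hh
    have h1 : |h| ≤ 1 := le_of_lt (lt_of_lt_of_le hh (min_le_left _ _))
    have h2 : |h| ≤ c := le_of_lt (lt_of_lt_of_le hh (min_le_right _ _))
    have hmh : |max h 0| ≤ |h| := by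
      rcases le_or_gt h 0 with h' | h'
      · simp [max_eq_right h', abs_nonneg]
      · simp [max_eq_left h'.le]
    calc ‖(max h 0)^n‖ = |max h 0|^n := by rw [Real.norm_eq_abs, abs_pow]
      _ ≤ |h|^n := pow_le_pow_left₀ (abs_nonneg _) hmh n
      _ ≤ |h|^2 := pow_le_pow_of_le_one (abs_nonneg _) h1 hn
      _ = |h| * |h| := sq (|h|) ▸ by ring
      _ ≤ c * |h| := mul_le_mul_of_nonneg_right h2 (abs_nonneg _)
      _ = c * ‖h‖ := by rw [Real.norm_eq_abs]
  · have hmx : max x 0 = x := max_eq_left hx.le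
    rw [hmx]
    refine (hasDerivAt_pow n x).congr_of_eventuallyEq ?_
    filter_upwards [Ioi_mem_nhds hx] with y hy
    simp [max_eq_left (le_of_lt (Set.mem_Ioi.mp hy))]


noncomputable def mX (t : ℝ) : ℝ := max (t-1) 0
noncomputable def QX (t : ℝ) : ℝ := Real.exp 1 + (mX t)^4
noncomputable def WX (t : ℝ) : ℝ := Real.log (QX t)
noncomputable def LX (t : ℝ) : ℝ := Real.log (WX t)
noncomputable def L1X (t : ℝ) : ℝ := 4*(mX t)^3 / (QX t * WX t)
noncomputable def L2X (t : ℝ) : ℝ :=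
  (12*(mX t)^2 * (QX t * WX t) - 4*(mX t)^3 * (4*(mX t)^3 * (WX t + 1))) / (QX t * WX t)^2
noncomputable def uX (a b ε t : ℝ) : ℝ := a - b * Real.cos (ε * LX t)
noncomputable def u1X (b ε t : ℝ) : ℝ := b * ε * (Real.sin (ε * LX t) * L1X t)
noncomputable def u2X (b ε t : ℝ) : ℝ :=
  b*ε^2*(Real.cos (ε*LX t)*(L1X t)^2) + b*ε*(Real.sin (ε*LX t)*L2X t)
noncomputable def GX (a b ε t : ℝ) : ℝ := Real.exp (uX a b ε t * Real.log t)
noncomputable def G1X (a b ε t : ℝ) : ℝ :=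
  GX a b ε t * (u1X b ε t * Real.log t + uX a b ε t / t)
noncomputable def G2X (a b ε t : ℝ) : ℝ :=
  GX a b ε t * ((u1X b ε t * Real.log t + uX a b ε t / t)^2 +
    (u2X b ε t * Real.log t + u1X b ε t / t + (u1X b ε t * t - uX a b ε t)/t^2))

lemma mX_nonneg (t : ℝ) : 0 ≤ mX t := le_max_right _ _
lemma QX_ge (t : ℝ) : Real.exp 1 ≤ QX t := le_add_of_nonneg_right (by positivity)
lemma QX_pos (t : ℝ) : 0 < QX t := lt_of_lt_of_le (Real.exp_pos 1) (QX_ge t)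
lemma WX_ge_one (t : ℝ) : 1 ≤ WX t := by
  have := Real.log_le_log (Real.exp_pos 1) (QX_ge t)
  rwa [Real.log_exp] at this
lemma WX_pos (t : ℝ) : 0 < WX t := lt_of_lt_of_le one_pos (WX_ge_one t)


lemma hasDerivAt_mX4 (x : ℝ) : HasDerivAt (fun t => (mX t)^4) (4*(mX x)^3) x := by
  have h1 : HasDerivAt (fun t : ℝ => t - 1) 1 x := (hasDerivAt_id x).sub_const 1
  have h2 := (hasDerivAt_maxpow 4 (by norm_num) (x-1)).comp x h1
  simpa [mX, Function.comp_def] using h2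

lemma hasDerivAt_mX3 (x : ℝ) : HasDerivAt (fun t => 4*(mX t)^3) (12*(mX x)^2) x := by
  have h1 : HasDerivAt (fun t : ℝ => t - 1) 1 x := (hasDerivAt_id x).sub_const 1
  have h2 := ((hasDerivAt_maxpow 3 (by norm_num) (x-1)).comp x h1).const_mul 4
  have e : (4:ℝ) * ((3:ℕ) * (max (x-1) 0)^(3-1) * 1) = 12*(mX x)^2 := by
    simp [mX]; ring
  rw [e] at h2
  exact h2

lemma hQX (x : ℝ) : HasDerivAt QX (4*(mX x)^3) x := (hasDerivAt_mX4 x).const_add _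

lemma hWX (x : ℝ) : HasDerivAt WX (4*(mX x)^3 / QX x) x := (hQX x).log (QX_pos x).ne'

lemma hLX (x : ℝ) : HasDerivAt LX (L1X x) x := by
  have := (hWX x).log (WX_pos x).ne'
  rwa [div_div, ← L1X] at this

lemma hDen (x : ℝ) : HasDerivAt (fun t => QX t * WX t) (4*(mX x)^3 * (WX x + 1)) x := by
  have := (hQX x).mul (hWX x)
  have e : 4*(mX x)^3 * WX x + QX x * (4*(mX x)^3 / QX x) = 4*(mX x)^3 * (WX x + 1) := by
    rw [mul_div_cancel₀ _ (QX_pos x).ne']; ring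
  rwa [e] at this

lemma hL1X (x : ℝ) : HasDerivAt L1X (L2X x) x := by
  have hne : QX x * WX x ≠ 0 := ne_of_gt (mul_pos (QX_pos x) (WX_pos x))
  have := (hasDerivAt_mX3 x).div (hDen x) hne
  convert this using 1
  any_goals rfl
  all_goals simp only [L2X]
  all_goals ring

lemma huX (a b ε : ℝ) (x : ℝ) : HasDerivAt (uX a b ε) (u1X b ε x) x := by
  have h1 : HasDerivAt (fun t => ε * LX t) (ε * L1X x) x := (hLX x).const_mul ε
  have h2 := h1.cos
  have h3 := (h2.const_mul b).const_sub a
  convert h3 using 1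
  any_goals rfl
  rw [u1X]; ring

lemma hu1X (a b ε : ℝ) (x : ℝ) : HasDerivAt (u1X b ε) (u2X b ε x) x := by
  have h1 : HasDerivAt (fun t => ε * LX t) (ε * L1X x) x := (hLX x).const_mul ε
  have h2 := (h1.sin.mul (hL1X x)).const_mul (b * ε)
  convert h2 using 1
  any_goals rfl
  rw [u2X]; ring

lemma hGX (a b ε : ℝ) {x : ℝ} (hx : 0 < x) : HasDerivAt (GX a b ε) (G1X a b ε x) x := by
  have h1 := (huX a b ε x).mul (Real.hasDerivAt_log hx.ne')
  have h2 := h1.exp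
  convert h2 using 1
  any_goals rfl
  all_goals simp only [G1X, GX]
  all_goals field_simp
  all_goals ring

lemma hG1X (a b ε : ℝ) {x : ℝ} (hx : 0 < x) : HasDerivAt (G1X a b ε) (G2X a b ε x) x := by
  have hA : HasDerivAt (fun t => u1X b ε t * Real.log t + uX a b ε t / t)
      (u2X b ε x * Real.log x + u1X b ε x * x⁻¹ + (u1X b ε x * x - uX a b ε x)/x^2) x := by
    have h1 := (hu1X a b ε x).mul (Real.hasDerivAt_log hx.ne')
    have h2 := (huX a b ε x).div (hasDerivAt_id x) hx.ne'
    have := h1.add h2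
    simp only [id_eq, mul_one] at this
    convert this using 1
    any_goals rfl
    all_goals field_simp
    all_goals ring
  have := (hGX a b ε hx).mul hA
  convert this using 1
  any_goals rfl
  all_goals simp only [G2X, G1X]
  all_goals field_simp
  all_goals ring

lemma e_gt : (2.718 : ℝ) < Real.exp 1 := by
  have := Real.exp_one_gt_d9; linarith

lemma log_bound {x : ℝ} (hx : 1 ≤ x) : 4 * Real.log x ≤ (77/25) * WX x := by
  have hx0 : 0 < x := lt_of_lt_of_le one_pos hx
  have hm : mX x = x - 1 := max_eq_left (by linarith)
  have h8 : x^4 ≤ 8 * QX x := by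
    rw [QX, hm]
    have he := e_gt
    nlinarith [sq_nonneg (x-2), sq_nonneg ((x-1)^2-1), sq_nonneg (x-1), sq_nonneg x]
  have h1 : Real.log (x^4) ≤ Real.log (8 * QX x) := by
    apply Real.log_le_log (by positivity) h8
  rw [Real.log_pow, Real.log_mul (by norm_num) (QX_pos x).ne'] at h1
  have hlog8 : Real.log 8 ≤ 2.08 := by
    have h2 : (8:ℝ) = 2^3 := by norm_num
    rw [h2, Real.log_pow]
    have := Real.log_two_lt_d9
    push_cast
    linarith
  have hW := WX_ge_one x
  push_cast at h1
  have hW' : (1:ℝ) ≤ Real.log (QX x) := WX_ge_one x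
  show 4 * Real.log x ≤ (77/25) * Real.log (QX x)
  linarith

lemma L1_bounds {x : ℝ} (hx : 1 ≤ x) :
    0 ≤ L1X x ∧ L1X x * x ≤ 6 ∧ L1X x * Real.log x ≤ 2 ∧ L1X x * Real.log x * x ≤ 5 := by
  have hx0 : 0 < x := lt_of_lt_of_le one_pos hx
  have hm : mX x = x - 1 := max_eq_left (by linarith)
  have hs : 0 ≤ x - 1 := by linarith
  have hP : 0 < QX x := QX_pos x
  have hW : 1 ≤ WX x := WX_ge_one x
  have hPW : 0 < QX x * WX x := mul_pos hP (WX_pos x)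
  have hlog : 0 ≤ Real.log x := Real.log_nonneg hx
  have hlb := log_bound hx
  have hQ : QX x = Real.exp 1 + (x-1)^4 := by rw [QX, hm]
  have he := e_gt
  refine ⟨div_nonneg (mul_nonneg (by norm_num) (pow_nonneg (mX_nonneg x) 3)) hPW.le, ?_, ?_, ?_⟩
  · rw [L1X, div_mul_eq_mul_div, div_le_iff₀ hPW, hm]
    have h1 : 4*(x-1)^3*x ≤ 6 * QX x := by
      rw [hQ]; nlinarith [sq_nonneg ((x-1)^2-(x-1)-1), sq_nonneg (x-2)]
    nlinarith [mul_le_mul_of_nonneg_right h1 (le_trans one_pos.le hW)]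
  · rw [L1X, div_mul_eq_mul_div, div_le_iff₀ hPW, hm]
    have h1 : (77/25)*(x-1)^3 ≤ 2 * QX x := by
      rw [hQ]; nlinarith [sq_nonneg ((x-1)^2-(x-1)-1), sq_nonneg (x-2)]
    nlinarith [mul_le_mul_of_nonneg_right h1 (WX_pos x).le, mul_le_mul_of_nonneg_left hlb (by positivity : (0:ℝ) ≤ (x-1)^3)]
  · rw [L1X, div_mul_eq_mul_div, div_mul_eq_mul_div, div_le_iff₀ hPW, hm]
    have h1 : (77/25)*((x-1)^3*x) ≤ 5 * QX x := by
      rw [hQ]; nlinarith [sq_nonneg ((x-1)^2-(x-1)-1), sq_nonneg (x-2)]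
    nlinarith [mul_le_mul_of_nonneg_right h1 (WX_pos x).le,
      mul_le_mul_of_nonneg_left hlb (by positivity : (0:ℝ) ≤ (x-1)^3*x)]


set_option maxHeartbeats 1000000 in
lemma L2_bound {x : ℝ} (hx : 1 ≤ x) : |L2X x| * Real.log x * x^2 ≤ 74 := by
  have hx0 : 0 < x := lt_of_lt_of_le one_pos hx
  have hm : mX x = x - 1 := max_eq_left (by linarith)
  have hs : 0 ≤ x - 1 := by linarith
  have hP : 0 < QX x := QX_pos x
  have hW : 1 ≤ WX x := WX_ge_one x
  have hW0 : 0 < WX x := WX_pos x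
  have hPW : 0 < QX x * WX x := mul_pos hP hW0
  have hlog : 0 ≤ Real.log x := Real.log_nonneg hx
  have hlb := log_bound hx
  have hQ : QX x = Real.exp 1 + (x-1)^4 := by rw [QX, hm]
  have he := e_gt
  have hlam : Real.log x ≤ (77/100) * WX x := by linarith
  have hp1 : (x-1)^2*x^2 ≤ 2*QX x := by
    rw [hQ]; nlinarith [sq_nonneg ((x-1)^2-(x-1)-6/5), sq_nonneg ((x-1)-3)]
  have hp2 : (x-1)^3*x ≤ (3/2)*QX x := by
    rw [hQ]; nlinarith [sq_nonneg ((x-1)^2-(x-1)-1), sq_nonneg ((x-1)-2)]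
  have hq0 : (0:ℝ) ≤ (x-1)^3*x := by positivity
  have hc : Real.log x * ((x-1)^2*x^2) ≤ (77/100)*WX x * (2*QX x) :=
    mul_le_mul hlam hp1 (by positivity) (by positivity)
  have key1 := mul_le_mul_of_nonneg_left hc
    (show (0:ℝ) ≤ 12*(QX x*WX x) from by positivity)
  have hqq : ((x-1)^3*x)*((x-1)^3*x) ≤ ((3/2)*QX x)*((3/2)*QX x) :=
    mul_le_mul hp2 hp2 hq0 (by positivity)
  have hWp : WX x + 1 ≤ 2*WX x := by linarith
  have hA : (WX x+1)*Real.log x ≤ (2*WX x)*((77/100)*WX x) :=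
    mul_le_mul hWp hlam hlog (by positivity)
  have hB := mul_le_mul hqq hA (mul_nonneg (by linarith) hlog) (by positivity)
  have hfin : (12*(x-1)^2*(QX x*WX x) + 16*(x-1)^6*(WX x+1)) * Real.log x * x^2
      ≤ 74 * (QX x*WX x)^2 := by linarith [key1, hB, sq_nonneg (QX x * WX x)]
  have hnum : |12*(x-1)^2 * (QX x * WX x) - 4*(x-1)^3 * (4*(x-1)^3 * (WX x + 1))|
      ≤ 12*(x-1)^2*(QX x*WX x) + 16*(x-1)^6*(WX x+1) := by
    rw [abs_le]
    have hA0 : (0:ℝ) ≤ 12*(x-1)^2*(QX x*WX x) := mul_nonneg (by positivity) hPW.le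
    have hB0 : (0:ℝ) ≤ 16*(x-1)^6*(WX x+1) := mul_nonneg (by positivity) (by linarith)
    constructor <;> (ring_nf; ring_nf at hA0 hB0; linarith [hA0, hB0])
  have habs : |L2X x| ≤ (12*(x-1)^2*(QX x*WX x) + 16*(x-1)^6*(WX x+1)) / (QX x*WX x)^2 := by
    rw [L2X, hm, abs_div, abs_of_pos (pow_pos hPW 2)]
    exact (div_le_div_iff_of_pos_right (pow_pos hPW 2)).mpr hnum
  calc |L2X x| * Real.log x * x^2
      ≤ ((12*(x-1)^2*(QX x*WX x) + 16*(x-1)^6*(WX x+1)) / (QX x*WX x)^2) * Real.log x * x^2 :=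
        mul_le_mul_of_nonneg_right (mul_le_mul_of_nonneg_right habs hlog) (sq_nonneg x)
    _ ≤ 74 := by
        rw [div_mul_eq_mul_div, div_mul_eq_mul_div, div_le_iff₀ (pow_pos hPW 2)]
        linarith [hfin]

set_option maxHeartbeats 4000000 in
lemma bracket_pos (a b ε : ℝ) (hb : 0 < b) (hab : 1 < a - b) (hε : 0 < ε) (hε1 : ε ≤ 1)
    (hε2 : 224 * (b*ε) < a - b - 1) (x : ℝ) :
    0 < u1X b ε x * Real.log x * x + uX a b ε x ∧
    0 < (u1X b ε x * Real.log x * x + uX a b ε x)^2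
        + u2X b ε x * Real.log x * x^2 + 2*(u1X b ε x * x) - uX a b ε x := by
  have hu_lb : 1 < uX a b ε x := by
    rw [uX]; nlinarith [Real.cos_le_one (ε * LX x)]
  have hu_lb2 : a - b ≤ uX a b ε x := by
    rw [uX]; nlinarith [Real.cos_le_one (ε * LX x)]
  rcases le_or_gt x 1 with hx | hx
  · have hm : mX x = 0 := max_eq_right (by linarith)
    have hL1 : L1X x = 0 := by rw [L1X, hm]; simp
    have hL2 : L2X x = 0 := by rw [L2X, hm]; simp
    have h1 : u1X b ε x = 0 := by rw [u1X, hL1]; ring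
    have h2 : u2X b ε x = 0 := by rw [u2X, hL1, hL2]; ring
    rw [h1, h2]; constructor
    · simp; linarith
    · nlinarith [hu_lb]
  · set δ := b * ε with hδdef
    have hδ0 : 0 < δ := mul_pos hb hε
    obtain ⟨hL1n, hL1a, hL1b, hL1c⟩ := L1_bounds hx.le
    have hL2 := L2_bound hx.le
    have hlog : 0 ≤ Real.log x := Real.log_nonneg hx.le
    have hx0 : 0 < x := by linarith
    set S := Real.sin (ε * LX x) with hSdef
    set C := Real.cos (ε * LX x) with hCdef
    have hS : |S| ≤ 1 := abs_le.mpr ⟨Real.neg_one_le_sin _, Real.sin_le_one _⟩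
    have hC : |C| ≤ 1 := abs_le.mpr ⟨Real.neg_one_le_cos _, Real.cos_le_one _⟩
    have hKx : 0 ≤ L1X x * x := mul_nonneg hL1n hx0.le
    have hKlx0 : 0 ≤ L1X x * Real.log x * x := mul_nonneg (mul_nonneg hL1n hlog) hx0.le
    -- bound A := u1X * log x * x
    have eA : u1X b ε x * Real.log x * x = δ * (S * (L1X x * Real.log x * x)) := by
      rw [u1X]; ring
    have bA : |S * (L1X x * Real.log x * x)| ≤ 5 := by
      rw [abs_mul, abs_of_nonneg hKlx0]
      nlinarith [abs_nonneg S]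
    have hA : |u1X b ε x * Real.log x * x| ≤ 5*δ := by
      rw [eA, abs_mul, abs_of_pos hδ0]
      nlinarith [abs_nonneg (S * (L1X x * Real.log x * x))]
    -- bound C2 := 2*(u1X * x)
    have eC : u1X b ε x * x = δ * (S * (L1X x * x)) := by rw [u1X]; ring
    have bC : |S * (L1X x * x)| ≤ 6 := by
      rw [abs_mul, abs_of_nonneg hKx]
      nlinarith [abs_nonneg S]
    have hCC : |u1X b ε x * x| ≤ 6*δ := by
      rw [eC, abs_mul, abs_of_pos hδ0]
      nlinarith [abs_nonneg (S * (L1X x * x))]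
    -- bound B := u2X * log x * x^2
    have eB : u2X b ε x * Real.log x * x^2
        = δ * (ε * (C * ((L1X x * x) * (L1X x * Real.log x * x))) + S * (L2X x * Real.log x * x^2)) := by
      rw [u2X]; ring
    have bB1 : |C * ((L1X x * x) * (L1X x * Real.log x * x))| ≤ 30 := by
      rw [abs_mul, abs_of_nonneg (mul_nonneg hKx hKlx0)]
      nlinarith [abs_nonneg C, mul_le_mul hL1a hL1c hKlx0 (by norm_num : (0:ℝ) ≤ 6),
        mul_nonneg hKx hKlx0]
    have bB2 : |S * (L2X x * Real.log x * x^2)| ≤ 74 := by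
      rw [abs_mul]
      have h74 : |L2X x * Real.log x * x^2| ≤ 74 := by
        rw [abs_mul, abs_mul, abs_of_nonneg hlog, abs_of_nonneg (sq_nonneg x)]
        exact hL2
      nlinarith [abs_nonneg S, abs_nonneg (L2X x * Real.log x * x^2)]
    have hB : |u2X b ε x * Real.log x * x^2| ≤ 104*δ := by
      rw [eB, abs_mul, abs_of_pos hδ0]
      have h1 : |ε * (C * ((L1X x * x) * (L1X x * Real.log x * x))) + S * (L2X x * Real.log x * x^2)|
          ≤ 104 := by
        have := abs_add_le (ε * (C * ((L1X x * x) * (L1X x * Real.log x * x))))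
          (S * (L2X x * Real.log x * x^2))
        have h2 : |ε * (C * ((L1X x * x) * (L1X x * Real.log x * x)))| ≤ 30 := by
          rw [abs_mul, abs_of_pos hε]
          nlinarith [abs_nonneg (C * ((L1X x * x) * (L1X x * Real.log x * x)))]
        linarith
      nlinarith [abs_nonneg (ε * (C * ((L1X x * x) * (L1X x * Real.log x * x))) + S * (L2X x * Real.log x * x^2))]
    -- final
    obtain ⟨hA1, hA2⟩ := abs_le.mp hA
    refine ⟨by linarith, ?_⟩
    obtain ⟨hB1, hB2⟩ := abs_le.mp hB
    obtain ⟨hC1, hC2⟩ := abs_le.mp hCC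
    have hv : 224*δ < uX a b ε x - 1 := by linarith
    have key : (uX a b ε x - 5*δ)^2 ≤ (u1X b ε x * Real.log x * x + uX a b ε x)^2 := by
      linarith [mul_nonneg (by linarith : (0:ℝ) ≤ u1X b ε x * Real.log x * x + 5*δ)
        (by linarith : (0:ℝ) ≤ u1X b ε x * Real.log x * x + 2*uX a b ε x - 5*δ)]
    linarith [key, mul_pos (by linarith : (0:ℝ) < uX a b ε x - 1)
      (by linarith : (0:ℝ) < uX a b ε x - 1 - 224*δ),
      mul_nonneg hδ0.le (by linarith : (0:ℝ) ≤ uX a b ε x - 1), mul_pos hδ0 hδ0]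


lemma G1X_pos (a b ε : ℝ) (hb : 0 < b) (hab : 1 < a - b) (hε : 0 < ε) (hε1 : ε ≤ 1)
    (hε2 : 224 * (b*ε) < a - b - 1) {x : ℝ} (hx : 0 < x) : 0 < G1X a b ε x := by
  obtain ⟨h1, _⟩ := bracket_pos a b ε hb hab hε hε1 hε2 x
  rw [G1X]
  apply mul_pos (Real.exp_pos _)
  have e : u1X b ε x * Real.log x + uX a b ε x / x
      = (u1X b ε x * Real.log x * x + uX a b ε x)/x := by field_simp
  rw [e]; exact div_pos h1 hx

lemma G2X_pos (a b ε : ℝ) (hb : 0 < b) (hab : 1 < a - b) (hε : 0 < ε) (hε1 : ε ≤ 1)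
    (hε2 : 224 * (b*ε) < a - b - 1) {x : ℝ} (hx : 0 < x) : 0 < G2X a b ε x := by
  obtain ⟨_, h2⟩ := bracket_pos a b ε hb hab hε hε1 hε2 x
  rw [G2X]
  apply mul_pos (Real.exp_pos _)
  have e : (u1X b ε x * Real.log x + uX a b ε x / x)^2
      + (u2X b ε x * Real.log x + u1X b ε x / x + (u1X b ε x * x - uX a b ε x)/x^2)
      = ((u1X b ε x * Real.log x * x + uX a b ε x)^2
        + u2X b ε x * Real.log x * x^2 + 2*(u1X b ε x * x) - uX a b ε x)/x^2 := by
    field_simp; ring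
  rw [e]; exact div_pos h2 (by positivity)

theorem g_strictly_convex (a b ε : ℝ) (ha : 0 < a) (hb : 0 < b)
    (hab : 1 < a - b) (hε : 0 < ε) (hε' : ε < min 1 ((a - 1 - b) / (224 * b)))
    (φ : ℝ → ℝ)
    (hφ : ∀ t : ℝ, φ t = if t ≤ 1 then 3 * π / 2
      else 3 * π / 2 + ε * Real.log (Real.log (Real.exp 1 + (t - 1) ^ 4)))
    (g : ℝ → ℝ) (hg0 : g 0 = 0)
    (hg : ∀ t : ℝ, 0 < t → g t = t ^ (a + b * Real.sin (φ t))) :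
    StrictConvexOn ℝ (Set.Ici 0) g ∧
    StrictMonoOn (derivWithin g (Set.Ici 0)) (Set.Ici 0) := by
  have hε1 : ε ≤ 1 := le_of_lt (lt_min_iff.mp hε').1
  have hε2 : 224 * (b*ε) < a - b - 1 := by
    have h := (lt_min_iff.mp hε').2
    rw [lt_div_iff₀ (by positivity)] at h
    linarith
  have hgG : ∀ t : ℝ, 0 < t → g t = GX a b ε t := by
    intro t ht
    rw [hg t ht, Real.rpow_def_of_pos ht, GX]
    have hexp : a + b * Real.sin (φ t) = uX a b ε t := by
      rw [hφ t]
      by_cases h1 : t ≤ 1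
      · rw [if_pos h1]
        have hm : mX t = 0 := max_eq_right (by linarith)
        have hL : LX t = 0 := by
          rw [LX, WX, QX, hm]
          norm_num
        have hsin : Real.sin (3*π/2) = -1 := by
          rw [show 3*π/2 = π/2 + π by ring, Real.sin_add_pi, Real.sin_pi_div_two]
        rw [uX, hL, hsin]
        simp only [mul_zero, Real.cos_zero, mul_one]
        ring
      · rw [if_neg h1]
        push_neg at h1
        have hm : mX t = t - 1 := max_eq_left (by linarith)
        have hL : LX t = Real.log (Real.log (Real.exp 1 + (t-1)^4)) := by
          rw [LX, WX, QX, hm]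
        rw [uX, hL,
          show 3*π/2 + ε*Real.log (Real.log (Real.exp 1 + (t-1)^4))
            = (ε*Real.log (Real.log (Real.exp 1 + (t-1)^4)) + π) + π/2 by ring,
          Real.sin_add_pi_div_two, Real.cos_add_pi]
        ring
    rw [hexp, mul_comm]
  have hEq : ∀ x : ℝ, 0 < x → g =ᶠ[𝓝 x] GX a b ε := fun x hx =>
    Filter.eventuallyEq_of_mem (Ioi_mem_nhds hx) (fun t ht => hgG t ht)
  have hgd : ∀ x : ℝ, 0 < x → HasDerivAt g (G1X a b ε x) x := fun x hx =>
    (hGX a b ε hx).congr_of_eventuallyEq (hEq x hx)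
  have hderiv : ∀ x : ℝ, 0 < x → deriv g x = G1X a b ε x := fun x hx => (hgd x hx).deriv
  have hEq1 : ∀ x : ℝ, 0 < x → deriv g =ᶠ[𝓝 x] G1X a b ε := fun x hx =>
    Filter.eventuallyEq_of_mem (Ioi_mem_nhds hx) (fun t ht => hderiv t ht)
  have hderiv2 : ∀ x : ℝ, 0 < x → deriv (deriv g) x = G2X a b ε x := fun x hx => by
    rw [(hEq1 x hx).deriv_eq]; exact (hG1X a b ε hx).deriv
  have hulb : ∀ t : ℝ, a - b ≤ uX a b ε t := by
    intro t
    rw [uX]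
    nlinarith [Real.cos_le_one (ε * LX t)]
  have hcont : ContinuousOn g (Set.Ici 0) := by
    intro x hx
    rcases eq_or_lt_of_le (Set.mem_Ici.mp hx) with h0 | h0
    · have hx0 : x = 0 := h0.symm
      subst hx0
      have hb0 : Tendsto (fun t:ℝ => t ^ (a-b)) (𝓝[Set.Ici 0] 0) (𝓝 0) := by
        have hc := (Real.continuousAt_rpow_const 0 (a-b)
          (Or.inr (by linarith))).continuousWithinAt (s := Set.Ici 0)
        have hc2 : Tendsto (fun t:ℝ => t ^ (a-b)) (𝓝[Set.Ici 0] 0) (𝓝 ((0:ℝ) ^ (a-b))) := hc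
        rwa [Real.zero_rpow (show (a-b) ≠ 0 by linarith)] at hc2
      have ht : Tendsto g (𝓝[Set.Ici 0] 0) (𝓝 0) := by
        apply tendsto_of_tendsto_of_tendsto_of_le_of_le' tendsto_const_nhds hb0
        · filter_upwards [self_mem_nhdsWithin] with t ht
          rcases eq_or_lt_of_le (Set.mem_Ici.mp ht) with h1 | h1
          · rw [← h1, hg0]
          · rw [hgG t h1]; exact (Real.exp_pos _).le
        · filter_upwards [self_mem_nhdsWithin, nhdsWithin_le_nhds (Iio_mem_nhds one_pos)]
            with t ht ht1
          rcases eq_or_lt_of_le (Set.mem_Ici.mp ht) with h1 | h1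
          · rw [← h1, hg0, Real.zero_rpow (by linarith : a - b ≠ 0)]
          · rw [hgG t h1, GX, Real.rpow_def_of_pos h1]
            apply Real.exp_le_exp.mpr
            have hlt : Real.log t < 0 := Real.log_neg h1 (Set.mem_Iio.mp ht1)
            nlinarith [hulb t, hlt]
      rw [ContinuousWithinAt, hg0]
      exact ht
    · exact ((hgd x h0).continuousAt).continuousWithinAt
  have hconv : StrictConvexOn ℝ (Set.Ici 0) g := by
    apply strictConvexOn_of_deriv2_pos (convex_Ici 0) hcont
    intro x hx
    rw [interior_Ici] at hx
    have hit : deriv^[2] g x = deriv (deriv g) x := rfl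
    rw [hit, hderiv2 x hx]
    exact G2X_pos a b ε hb hab hε hε1 hε2 hx
  have hd0 : HasDerivWithinAt g 0 (Set.Ici 0) 0 := by
    rw [hasDerivWithinAt_iff_tendsto_slope]
    have hset : Set.Ici (0:ℝ) \ {0} = Set.Ioi 0 := Set.Ici_sdiff_left
    rw [hset]
    have hb0 : Tendsto (fun t:ℝ => t ^ (a-b-1)) (𝓝[Set.Ioi 0] 0) (𝓝 0) := by
      have hc := (Real.continuousAt_rpow_const 0 (a-b-1)
        (Or.inr (by linarith))).continuousWithinAt (s := Set.Ioi 0)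
      have hc2 : Tendsto (fun t:ℝ => t ^ (a-b-1)) (𝓝[Set.Ioi 0] 0) (𝓝 ((0:ℝ) ^ (a-b-1))) := hc
      rwa [Real.zero_rpow (show (a-b-1) ≠ 0 by linarith)] at hc2
    apply tendsto_of_tendsto_of_tendsto_of_le_of_le' tendsto_const_nhds hb0
    · filter_upwards [self_mem_nhdsWithin] with t ht
      have ht0 : (0:ℝ) < t := Set.mem_Ioi.mp ht
      rw [slope_def_field, hg0, sub_zero, sub_zero, hgG t ht0, GX]
      exact div_nonneg (Real.exp_pos _).le ht0.le
    · filter_upwards [self_mem_nhdsWithin, nhdsWithin_le_nhds (Iio_mem_nhds one_pos)]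
        with t ht ht1
      have ht0 : (0:ℝ) < t := Set.mem_Ioi.mp ht
      have ht1' : t < 1 := Set.mem_Iio.mp ht1
      rw [slope_def_field, hg0, sub_zero, sub_zero, hgG t ht0, GX]
      have e1 : Real.exp (uX a b ε t * Real.log t) / t
          = Real.exp (uX a b ε t * Real.log t - Real.log t) := by
        rw [Real.exp_sub, Real.exp_log ht0]
      rw [e1, Real.rpow_def_of_pos ht0]
      apply Real.exp_le_exp.mpr
      have hlt : Real.log t < 0 := Real.log_neg ht0 ht1'
      nlinarith [hulb t, hlt]
  have hdW0 : derivWithin g (Set.Ici 0) 0 = 0 :=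
    hd0.derivWithin ((uniqueDiffOn_Ici 0) 0 Set.self_mem_Ici)
  have hdWx : ∀ x : ℝ, 0 < x → derivWithin g (Set.Ici 0) x = G1X a b ε x := fun x hx => by
    rw [derivWithin_of_mem_nhds (Ici_mem_nhds hx), hderiv x hx]
  have hEqW : ∀ x : ℝ, 0 < x → derivWithin g (Set.Ici 0) =ᶠ[𝓝 x] G1X a b ε := fun x hx =>
    Filter.eventuallyEq_of_mem (Ioi_mem_nhds hx) (fun t ht => hdWx t ht)
  have hmono : StrictMonoOn (derivWithin g (Set.Ici 0)) (Set.Ioi 0) := by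
    apply strictMonoOn_of_deriv_pos (convex_Ioi 0)
    · intro x hx
      have hx0 : (0:ℝ) < x := Set.mem_Ioi.mp hx
      exact ((hG1X a b ε hx0).continuousAt.congr_of_eventuallyEq (hEqW x hx0)).continuousWithinAt
    · intro x hx
      rw [interior_Ioi] at hx
      have hx0 : (0:ℝ) < x := Set.mem_Ioi.mp hx
      rw [(hEqW x hx0).deriv_eq, (hG1X a b ε hx0).deriv]
      exact G2X_pos a b ε hb hab hε hε1 hε2 hx0
  refine ⟨hconv, ?_⟩
  intro x hx y hy hxy
  rcases eq_or_lt_of_le (Set.mem_Ici.mp hx) with h0 | h0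
  · rw [← h0, hdW0, hdWx y (by linarith [h0] : (0:ℝ) < y)]
    exact G1X_pos a b ε hb hab hε hε1 hε2 (by linarith [h0])
  · exact hmono (Set.mem_Ioi.mpr h0) (Set.mem_Ioi.mpr (lt_trans h0 hxy)) hxy
end

section
/- Let a, b > 0 with a − b > 1 and a + b < 2, let ε > 0 satisfy ε < min{1, (a−1−b)/(224b)} and ε < (2−a−b)/(224b), let φ(t) = 3π/2 for t ≤ 1 and φ(t) = 3π/2 + ε·ln(ln(e + (t−1)⁴)) for t > 1, and let g(t) = t^(a + b·sin(φ(t))) for t > 0, g(0) = 0. Then the function t ↦ g'(t)/t is strictly decreasing on (0,∞). -/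
open Real Filter Topology

noncomputable def vv (t : ℝ) : ℝ := Real.exp 1 + (t - 1) ^ 4
noncomputable def LL (t : ℝ) : ℝ := Real.log (vv t)
noncomputable def ps (t : ℝ) : ℝ := Real.log (LL t)
noncomputable def psd (t : ℝ) : ℝ := 4 * (t - 1) ^ 3 / (vv t * LL t)
noncomputable def psdd (t : ℝ) : ℝ :=
  (12 * (t - 1) ^ 2 * (vv t * LL t) - 4 * (t - 1) ^ 3 * (4 * (t - 1) ^ 3 * (LL t + 1))) /
    (vv t * LL t) ^ 2

lemma vv_pos (t : ℝ) : 0 < vv t := by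
  have := Real.exp_pos 1
  have : (0:ℝ) ≤ (t-1)^4 := by positivity
  unfold vv; nlinarith [Real.exp_pos 1]

lemma exp_le_vv (t : ℝ) : Real.exp 1 ≤ vv t := by
  have : (0:ℝ) ≤ (t-1)^4 := by positivity
  unfold vv; linarith

lemma LL_ge_one (t : ℝ) : 1 ≤ LL t := by
  have h := exp_le_vv t
  have := Real.log_le_log (Real.exp_pos 1) h
  rwa [Real.log_exp] at this

lemma LL_pos (t : ℝ) : 0 < LL t := lt_of_lt_of_le one_pos (LL_ge_one t)

lemma hasDerivAt_vv (t : ℝ) : HasDerivAt vv (4 * (t - 1) ^ 3) t := by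
  have h : HasDerivAt (fun t : ℝ => (t - 1) ^ 4) ((4:ℕ) * (t - 1) ^ (4-1) * 1) t :=
    ((hasDerivAt_id t).sub_const 1).pow 4
  have h2 := h.const_add (Real.exp 1)
  refine h2.congr_deriv ?_
  push_cast; ring

lemma hasDerivAt_LL (t : ℝ) : HasDerivAt LL (4 * (t - 1) ^ 3 / vv t) t :=
  (hasDerivAt_vv t).log (ne_of_gt (vv_pos t))

lemma hasDerivAt_ps (t : ℝ) : HasDerivAt ps (psd t) t := by
  have h := (hasDerivAt_LL t).log (ne_of_gt (LL_pos t))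
  refine h.congr_deriv ?_
  unfold psd
  rw [div_div]

lemma hasDerivAt_psd (t : ℝ) : HasDerivAt psd (psdd t) t := by
  have hN : HasDerivAt (fun t : ℝ => 4 * (t - 1) ^ 3) (12 * (t - 1) ^ 2) t := by
    have h : HasDerivAt (fun t : ℝ => (t - 1) ^ 3) ((3:ℕ) * (t - 1) ^ (3-1) * 1) t :=
      ((hasDerivAt_id t).sub_const 1).pow 3
    have := h.const_mul (4:ℝ)
    refine this.congr_deriv ?_; push_cast; ring
  have hD : HasDerivAt (fun t : ℝ => vv t * LL t)
      (4 * (t - 1) ^ 3 * LL t + vv t * (4 * (t - 1) ^ 3 / vv t)) t :=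
    (hasDerivAt_vv t).mul (hasDerivAt_LL t)
  have hD0 : vv t * LL t ≠ 0 := ne_of_gt (mul_pos (vv_pos t) (LL_pos t))
  have h := hN.div hD hD0
  have hv0 : vv t ≠ 0 := ne_of_gt (vv_pos t)
  have hcan : vv t * (4 * (t - 1) ^ 3 / vv t) = 4 * (t - 1) ^ 3 := by field_simp
  rw [hcan] at h
  refine h.congr_deriv ?_
  unfold psdd
  congr 1
  ring

noncomputable def PP (a b ε t : ℝ) : ℝ := a - b * Real.cos (ε * ps t)
noncomputable def PPd (b ε t : ℝ) : ℝ := b * ε * Real.sin (ε * ps t) * psd t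
noncomputable def PPdd (b ε t : ℝ) : ℝ :=
  b * ε * Real.cos (ε * ps t) * (ε * psd t) * psd t + b * ε * Real.sin (ε * ps t) * psdd t
noncomputable def QQ (a b ε t : ℝ) : ℝ := PP a b ε t + t * PPd b ε t * Real.log t
noncomputable def QQd (a b ε t : ℝ) : ℝ :=
  PPd b ε t + ((PPd b ε t + t * PPdd b ε t) * Real.log t + PPd b ε t)
noncomputable def HH (a b ε t : ℝ) : ℝ :=
  Real.exp ((PP a b ε t - 2) * Real.log t) * QQ a b ε t
noncomputable def HHd (a b ε t : ℝ) : ℝ :=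
  Real.exp ((PP a b ε t - 2) * Real.log t) *
    ((PPd b ε t * Real.log t + (PP a b ε t - 2) / t) * QQ a b ε t + QQd a b ε t)


lemma hasDerivAt_PP (a b ε t : ℝ) : HasDerivAt (PP a b ε) (PPd b ε t) t := by
  have h := (((hasDerivAt_ps t).const_mul ε).cos.const_mul b).const_sub a
  refine h.congr_deriv ?_
  unfold PPd; ring

lemma hasDerivAt_PPd (b ε t : ℝ) : HasDerivAt (PPd b ε) (PPdd b ε t) t := by
  have h := ((((hasDerivAt_ps t).const_mul ε).sin).const_mul (b * ε)).mul (hasDerivAt_psd t)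
  refine h.congr_deriv ?_
  unfold PPdd
  ring

lemma hasDerivAt_QQ (a b ε t : ℝ) (ht : 0 < t) : HasDerivAt (QQ a b ε) (QQd a b ε t) t := by
  have h := (hasDerivAt_PP a b ε t).add
    ((((hasDerivAt_id t).mul (hasDerivAt_PPd b ε t)).mul (Real.hasDerivAt_log (ne_of_gt ht))))
  refine h.congr_deriv ?_
  unfold QQd
  simp only [Pi.mul_apply, id]
  field_simp

lemma hasDerivAt_HH (a b ε t : ℝ) (ht : 0 < t) : HasDerivAt (HH a b ε) (HHd a b ε t) t := by
  have h := ((((hasDerivAt_PP a b ε t).sub_const 2).mul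
      (Real.hasDerivAt_log (ne_of_gt ht))).exp).mul (hasDerivAt_QQ a b ε t ht)
  refine h.congr_deriv ?_
  unfold HHd
  simp only [Pi.mul_apply]
  field_simp

lemma log_le_LL (t : ℝ) (ht : 1 ≤ t) : Real.log t ≤ LL t := by
  have h : t ≤ vv t := by
    unfold vv; nlinarith [Real.exp_one_gt_d9, sq_nonneg ((t-1)^2 - 1), sq_nonneg (t-1),
      sq_nonneg ((t-1)^2 - (t-1))]
  exact Real.log_le_log (by linarith) h

lemma quart_core (u : ℝ) (hu : 0 ≤ u) : 0 ≤ u^4 - 2*u^3 - u^2 + 2*Real.exp 1 := by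
  nlinarith [Real.exp_one_gt_d9, sq_nonneg (u^2 - u - 1), sq_nonneg (u^2 - u - 2),
    sq_nonneg (2*u - 3)]

lemma psd_nonneg (t : ℝ) (ht : 1 ≤ t) : 0 ≤ psd t := by
  unfold psd
  have h1 : (0:ℝ) ≤ 4 * (t-1)^3 := by
    have := pow_nonneg (show (0:ℝ) ≤ t-1 by linarith) 3; linarith
  exact div_nonneg h1 (le_of_lt (mul_pos (vv_pos t) (LL_pos t)))

lemma bnd1 (t : ℝ) (ht : 1 ≤ t) : t * psd t ≤ 8 := by
  have hu : 0 ≤ t - 1 := by linarith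
  have hVL : 0 < vv t * LL t := mul_pos (vv_pos t) (LL_pos t)
  have heq : t * psd t = 4*(t-1)^3*t / (vv t * LL t) := by unfold psd; ring
  rw [heq, div_le_iff₀ hVL]
  have h1 : 4*(t-1)^3*t ≤ 8 * vv t := by
    unfold vv
    nlinarith [Real.exp_one_gt_d9, pow_nonneg hu 3, pow_nonneg hu 4, sq_nonneg ((t-1)^2 - (t-1))]
  nlinarith [LL_ge_one t, vv_pos t]

lemma bnd2 (t : ℝ) (ht : 1 ≤ t) : t * psd t * Real.log t ≤ 8 := by
  have hu : 0 ≤ t - 1 := by linarith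
  have hVL : 0 < vv t * LL t := mul_pos (vv_pos t) (LL_pos t)
  have heq : t * psd t * Real.log t = 4*(t-1)^3*t*Real.log t / (vv t * LL t) := by
    unfold psd; ring
  rw [heq, div_le_iff₀ hVL]
  have h1 : 4*(t-1)^3*t ≤ 8 * vv t := by
    unfold vv
    nlinarith [Real.exp_one_gt_d9, pow_nonneg hu 3, pow_nonneg hu 4, sq_nonneg ((t-1)^2 - (t-1))]
  have hlg : 0 ≤ Real.log t := Real.log_nonneg ht
  have hlgL : Real.log t ≤ LL t := log_le_LL t ht
  have h2 : 4*(t-1)^3*t*Real.log t ≤ 8 * vv t * LL t := by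
    have hN : 0 ≤ 4*(t-1)^3*t := by nlinarith [pow_nonneg hu 3]
    calc 4*(t-1)^3*t*Real.log t ≤ 4*(t-1)^3*t * LL t := by
          exact mul_le_mul_of_nonneg_left hlgL hN
      _ ≤ 8 * vv t * LL t := mul_le_mul_of_nonneg_right h1 (le_of_lt (LL_pos t))
  linarith

lemma bnd3 (t : ℝ) (ht : 1 ≤ t) : t^2 * psd t^2 * Real.log t ≤ 64 := by
  have h1 := bnd1 t ht
  have h2 := bnd2 t ht
  have h3 : 0 ≤ t * psd t := mul_nonneg (by linarith) (psd_nonneg t ht)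
  have h4 : 0 ≤ t * psd t * Real.log t := mul_nonneg h3 (Real.log_nonneg ht)
  nlinarith [mul_le_mul h1 h2 h4 (by norm_num : (0:ℝ) ≤ 8)]

lemma k1 (t : ℝ) (ht : 1 ≤ t) : 12*(t-1)^2*t^2 ≤ 24 * vv t := by
  have hu : 0 ≤ t - 1 := by linarith
  have := quart_core (t-1) hu
  unfold vv
  nlinarith [this]

lemma k2 (t : ℝ) (ht : 1 ≤ t) : (t-1)^6*t^2 ≤ 2 * (vv t)^2 := by
  have hu : 0 ≤ t - 1 := by linarith
  have hc := quart_core (t-1) hu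
  have h4 : 0 ≤ (t-1)^4 := by positivity
  unfold vv
  nlinarith [mul_nonneg h4 hc, Real.exp_one_gt_d9, sq_nonneg (t-1)]

lemma psdd_ub (t : ℝ) (ht : 1 ≤ t) : t^2 * psdd t * Real.log t ≤ 24 := by
  have hu : 0 ≤ t - 1 := by linarith
  have hVL : 0 < vv t * LL t := mul_pos (vv_pos t) (LL_pos t)
  have hlg : 0 ≤ Real.log t := Real.log_nonneg ht
  have hlgL : Real.log t ≤ LL t := log_le_LL t ht
  have hstep : psdd t ≤ 12*(t-1)^2 / (vv t * LL t) := by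
    unfold psdd
    have hrw : 12*(t-1)^2 / (vv t * LL t) = 12*(t-1)^2 * (vv t * LL t) / (vv t * LL t)^2 := by
      field_simp
    rw [hrw]
    have hrw2 : (12*(t-1)^2 * (vv t * LL t) - 4*(t-1)^3 * (4*(t-1)^3*(LL t + 1)))
        ≤ 12*(t-1)^2 * (vv t * LL t) := by
      nlinarith [mul_nonneg (mul_nonneg (pow_nonneg hu 3) (pow_nonneg hu 3))
        (by linarith [LL_pos t] : (0:ℝ) ≤ LL t + 1)]
    gcongr
  have hmul : t^2 * psdd t * Real.log t ≤ 12*(t-1)^2*t^2*Real.log t / (vv t * LL t) := by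
    have h0 : 0 ≤ t^2 * Real.log t := by positivity
    calc t^2 * psdd t * Real.log t = (t^2 * Real.log t) * psdd t := by ring
      _ ≤ (t^2 * Real.log t) * (12*(t-1)^2 / (vv t * LL t)) :=
          mul_le_mul_of_nonneg_left hstep h0
      _ = 12*(t-1)^2*t^2*Real.log t / (vv t * LL t) := by ring
  have hfin : 12*(t-1)^2*t^2*Real.log t / (vv t * LL t) ≤ 24 := by
    rw [div_le_iff₀ hVL]
    have := mul_le_mul (k1 t ht) hlgL hlg (by linarith [vv_pos t] : (0:ℝ) ≤ 24 * vv t)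
    nlinarith [this]
  linarith

lemma psdd_lb (t : ℝ) (ht : 1 ≤ t) : -64 ≤ t^2 * psdd t * Real.log t := by
  have hu : 0 ≤ t - 1 := by linarith
  have hVL : 0 < vv t * LL t := mul_pos (vv_pos t) (LL_pos t)
  have hL1 : 1 ≤ LL t := LL_ge_one t
  have hlg : 0 ≤ Real.log t := Real.log_nonneg ht
  have hlgL : Real.log t ≤ LL t := log_le_LL t ht
  have hstep : -(16*(t-1)^6*(LL t + 1) / (vv t * LL t)^2) ≤ psdd t := by
    unfold psdd
    have hrw2 : -(16*(t-1)^6*(LL t + 1))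
        ≤ 12*(t-1)^2 * (vv t * LL t) - 4*(t-1)^3 * (4*(t-1)^3*(LL t + 1)) := by
      nlinarith [mul_nonneg (mul_nonneg (by norm_num : (0:ℝ) ≤ 12) (sq_nonneg (t-1))) hVL.le]
    calc -(16*(t-1)^6*(LL t + 1) / (vv t * LL t)^2)
        = -(16*(t-1)^6*(LL t + 1)) / (vv t * LL t)^2 := by ring
      _ ≤ (12*(t-1)^2 * (vv t * LL t) - 4*(t-1)^3 * (4*(t-1)^3*(LL t + 1))) / (vv t * LL t)^2 :=
          by gcongr
  have hmul : -(16*(t-1)^6*(LL t + 1)*t^2*Real.log t / (vv t * LL t)^2) ≤ t^2 * psdd t * Real.log t := by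
    have h0 : 0 ≤ t^2 * Real.log t := by positivity
    calc -(16*(t-1)^6*(LL t + 1)*t^2*Real.log t / (vv t * LL t)^2)
        = (t^2 * Real.log t) * (-(16*(t-1)^6*(LL t + 1) / (vv t * LL t)^2)) := by ring
      _ ≤ (t^2 * Real.log t) * psdd t := mul_le_mul_of_nonneg_left hstep h0
      _ = t^2 * psdd t * Real.log t := by ring
  have hfin : 16*(t-1)^6*(LL t + 1)*t^2*Real.log t / (vv t * LL t)^2 ≤ 64 := by
    rw [div_le_iff₀ (by positivity)]
    have e1 : 16*(t-1)^6*(LL t + 1)*t^2 ≤ 64 * (vv t)^2 * LL t := by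
      have h2 : (LL t + 1) ≤ 2 * LL t := by linarith
      have h6 : (0:ℝ) ≤ (t-1)^6 := by positivity
      have h3 : 16*(t-1)^6*t^2 ≤ 32*(vv t)^2 := by nlinarith [k2 t ht]
      nlinarith [mul_le_mul h3 h2 (by linarith) (by nlinarith [sq_nonneg (vv t)] : (0:ℝ) ≤ 32*(vv t)^2),
        mul_nonneg (mul_nonneg h6 (by positivity : (0:ℝ) ≤ t^2)) (LL_pos t).le]
    have e2 : 0 ≤ 16*(t-1)^6*(LL t + 1)*t^2 := by positivity
    calc 16*(t-1)^6*(LL t + 1)*t^2*Real.log t ≤ 16*(t-1)^6*(LL t + 1)*t^2 * LL t :=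
          mul_le_mul_of_nonneg_left hlgL e2
      _ ≤ 64 * (vv t)^2 * LL t * LL t := mul_le_mul_of_nonneg_right e1 (LL_pos t).le
      _ = 64 * ((vv t)*(LL t))^2 := by ring
      _ = 64 * (vv t * LL t)^2 := by ring
  linarith

lemma bnd_help (M S T C : ℝ) (hM : 0 ≤ M) (hS : -1 ≤ S) (hS' : S ≤ 1)
    (hT : -C ≤ T) (hT' : T ≤ C) : -(M*C) ≤ M*(S*T) ∧ M*(S*T) ≤ M*C := by
  constructor <;>
  nlinarith [mul_nonneg hM (mul_nonneg (by linarith : (0:ℝ) ≤ 1 - S) (by linarith : (0:ℝ) ≤ C - T)),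
    mul_nonneg hM (mul_nonneg (by linarith : (0:ℝ) ≤ 1 + S) (by linarith : (0:ℝ) ≤ C + T)),
    mul_nonneg hM (mul_nonneg (by linarith : (0:ℝ) ≤ 1 - S) (by linarith : (0:ℝ) ≤ C + T)),
    mul_nonneg hM (mul_nonneg (by linarith : (0:ℝ) ≤ 1 + S) (by linarith : (0:ℝ) ≤ C - T))]

set_option maxHeartbeats 1000000 in
lemma HHd_neg (a b ε : ℝ) (hb : 0 < b) (hab : 1 < a - b) (hab2 : a + b < 2)
    (hε : 0 < ε) (hε1 : ε < 1) (hεb1 : 224 * b * ε < a - 1 - b)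
    (hεb2 : 224 * b * ε < 2 - a - b) (t : ℝ) (ht : 1 ≤ t) : HHd a b ε t < 0 := by
  have ht0 : 0 < t := by linarith
  have hlg : 0 ≤ Real.log t := Real.log_nonneg ht
  have hbε : 0 < b * ε := mul_pos hb hε
  have hbε224 : b * ε < 1 / 224 := by nlinarith
  set S := Real.sin (ε * ps t) with hSdef
  set Co := Real.cos (ε * ps t) with hCdef
  have hS : -1 ≤ S ∧ S ≤ 1 := ⟨Real.neg_one_le_sin _, Real.sin_le_one _⟩
  have hC : -1 ≤ Co ∧ Co ≤ 1 := ⟨Real.neg_one_le_cos _, Real.cos_le_one _⟩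
  have hw := psd_nonneg t ht
  -- X1 = t * PPd
  have hX1eq : t * PPd b ε t = (b*ε) * (S * (t * psd t)) := by unfold PPd; ring
  have hX1 := bnd_help (b*ε) S (t * psd t) 8 hbε.le hS.1 hS.2
    (by linarith [mul_nonneg ht0.le hw] : -(8:ℝ) ≤ t * psd t) (bnd1 t ht)
  -- X2 = t * PPd * log t
  have hX2eq : t * PPd b ε t * Real.log t = (b*ε) * (S * (t * psd t * Real.log t)) := by
    unfold PPd; ring
  have hX2 := bnd_help (b*ε) S (t * psd t * Real.log t) 8 hbε.le hS.1 hS.2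
    (by linarith [mul_nonneg (mul_nonneg ht0.le hw) hlg] : -(8:ℝ) ≤ t * psd t * Real.log t)
    (bnd2 t ht)
  -- X3 = t^2 * PPdd * log t
  have hX3eq : t^2 * PPdd b ε t * Real.log t
      = (b*ε) * (Co * (ε * (t^2 * psd t^2 * Real.log t))) + (b*ε) * (S * (t^2 * psdd t * Real.log t)) := by
    unfold PPdd; ring
  have hw2nn : 0 ≤ t^2 * psd t^2 * Real.log t := by positivity
  have hX3a := bnd_help (b*ε) Co (ε * (t^2 * psd t^2 * Real.log t)) 64 hbε.le hC.1 hC.2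
    (by nlinarith [hw2nn, hε.le] : -(64:ℝ) ≤ ε * (t^2 * psd t^2 * Real.log t))
    (by nlinarith [bnd3 t ht, hw2nn, mul_nonneg (by linarith : (0:ℝ) ≤ 1 - ε) hw2nn] : ε * (t^2 * psd t^2 * Real.log t) ≤ 64)
  have hX3b := bnd_help (b*ε) S (t^2 * psdd t * Real.log t) 64 hbε.le hS.1 hS.2
    (psdd_lb t ht) (by linarith [psdd_ub t ht])
  -- P and Q bounds
  have hPlb : a - b ≤ PP a b ε t := by unfold PP; nlinarith [hC.2]
  have hPub : PP a b ε t ≤ a + b := by unfold PP; nlinarith [hC.1]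
  have hQeq : QQ a b ε t = PP a b ε t + t * PPd b ε t * Real.log t := rfl
  have hQ1 : 1 ≤ QQ a b ε t := by rw [hQeq, hX2eq]; linarith [hX2.1, hPlb, hεb1, hbε]
  have hQ2 : QQ a b ε t ≤ 2 + 8*(b*ε) := by rw [hQeq, hX2eq]; linarith [hX2.2, hPub, hab2]
  -- main negative term
  have hmain : (PP a b ε t - 2) * QQ a b ε t ≤ a + b - 2 := by
    nlinarith [mul_nonneg (by linarith : (0:ℝ) ≤ 2 - PP a b ε t) (by linarith : (0:ℝ) ≤ QQ a b ε t - 1)]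
  -- cross term
  have hcross : (t * PPd b ε t * Real.log t) * QQ a b ε t ≤ 8*(b*ε)*(2 + 8*(b*ε)) := by
    rw [hX2eq]
    nlinarith [mul_nonneg (by linarith [hX2.2] : (0:ℝ) ≤ 8*(b*ε) - (b*ε) * (S * (t * psd t * Real.log t)))
        (by linarith : (0:ℝ) ≤ QQ a b ε t),
      mul_nonneg hbε.le (by linarith : (0:ℝ) ≤ 2 + 8*(b*ε) - QQ a b ε t)]
  -- assemble
  have hR : (PPd b ε t * Real.log t + (PP a b ε t - 2) / t) * QQ a b ε t + QQd a b ε t < 0 := by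
    by_contra hcon
    push_neg at hcon
    have hmulpos : 0 ≤ t * ((PPd b ε t * Real.log t + (PP a b ε t - 2) / t) * QQ a b ε t + QQd a b ε t) :=
      mul_nonneg ht0.le hcon
    have hexpand : t * ((PPd b ε t * Real.log t + (PP a b ε t - 2) / t) * QQ a b ε t + QQd a b ε t)
        = (t * PPd b ε t * Real.log t) * QQ a b ε t + (PP a b ε t - 2) * QQ a b ε t
          + 2*(t * PPd b ε t) + (t * PPd b ε t * Real.log t) + (t^2 * PPdd b ε t * Real.log t) := by
      unfold QQd; field_simp; ring
    rw [hexpand] at hmulpos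
    have e1 : -(8*(b*ε)) ≤ t * PPd b ε t := by rw [hX1eq]; linarith [hX1.1]
    have e2 : t * PPd b ε t ≤ 8*(b*ε) := by rw [hX1eq]; linarith [hX1.2]
    have e3 : -(8*(b*ε)) ≤ t * PPd b ε t * Real.log t := by rw [hX2eq]; linarith [hX2.1]
    have e4 : t * PPd b ε t * Real.log t ≤ 8*(b*ε) := by rw [hX2eq]; linarith [hX2.2]
    have e5 : t^2 * PPdd b ε t * Real.log t ≤ 128*(b*ε) := by
      rw [hX3eq]; nlinarith [hX3a.2, hX3b.2]
    have hsq : 64*((b*ε)*(b*ε)) ≤ b*ε := by nlinarith [hbε224, hbε]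
    linarith [hmain, hcross, e1, e2, e3, e4, e5, hsq, hεb2, hmulpos]
  have hexppos : 0 < Real.exp ((PP a b ε t - 2) * Real.log t) := Real.exp_pos _
  unfold HHd
  exact mul_neg_of_pos_of_neg hexppos hR

lemma ps_one : ps 1 = 0 := by
  unfold ps LL vv
  norm_num [Real.log_exp]

lemma psd_one : psd 1 = 0 := by
  unfold psd
  norm_num

lemma sin_three_pi_div_two_add (x : ℝ) : Real.sin (3 * π / 2 + x) = -Real.cos x := by
  rw [show 3 * π / 2 + x = π + (π/2 + x) by ring, Real.sin_add, Real.sin_pi, Real.cos_pi,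
    Real.sin_add]
  simp

lemma HH_strictAnti (a b ε : ℝ) (hb : 0 < b) (hab : 1 < a - b) (hab2 : a + b < 2)
    (hε : 0 < ε) (hε1 : ε < 1) (hεb1 : 224 * b * ε < a - 1 - b)
    (hεb2 : 224 * b * ε < 2 - a - b) : StrictAntiOn (HH a b ε) (Set.Ici 1) := by
  apply strictAntiOn_of_deriv_neg (convex_Ici 1)
  · intro t ht
    have ht0 : (0:ℝ) < t := lt_of_lt_of_le one_pos ht
    exact (hasDerivAt_HH a b ε t ht0).continuousAt.continuousWithinAt
  · intro t ht
    rw [interior_Ici] at ht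
    have ht0 : (0:ℝ) < t := lt_trans one_pos ht
    rw [(hasDerivAt_HH a b ε t ht0).deriv]
    exact HHd_neg a b ε hb hab hab2 hε hε1 hεb1 hεb2 t ht.le

theorem g_deriv_over_t_decreasing (a b ε : ℝ) (ha : 0 < a) (hb : 0 < b)
    (hab : 1 < a - b) (hab2 : a + b < 2)
    (hε : 0 < ε) (hε' : ε < min 1 ((a - 1 - b) / (224 * b)))
    (hε'' : ε < (2 - a - b) / (224 * b))
    (φ : ℝ → ℝ)
    (hφ : ∀ t : ℝ, φ t = if t ≤ 1 then 3 * π / 2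
      else 3 * π / 2 + ε * Real.log (Real.log (Real.exp 1 + (t - 1) ^ 4)))
    (g : ℝ → ℝ) (hg0 : g 0 = 0)
    (hg : ∀ t : ℝ, 0 < t → g t = t ^ (a + b * Real.sin (φ t))) :
    StrictAntiOn (fun t => deriv g t / t) (Set.Ioi 0) := by
  have hε1 : ε < 1 := lt_of_lt_of_le hε' (min_le_left _ _)
  have h224 : (0:ℝ) < 224 * b := by linarith
  have hεb1 : 224 * b * ε < a - 1 - b := by
    have := lt_of_lt_of_le hε' (min_le_right _ _)
    rw [lt_div_iff₀ h224] at this; linarith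
  have hεb2 : 224 * b * ε < 2 - a - b := by
    rw [lt_div_iff₀ h224] at hε''; linarith
  have hsin0 : Real.sin (3 * π / 2) = -1 := by
    have := sin_three_pi_div_two_add 0
    simpa using this
  -- g equals s ^ (a - b) on (0, 1]
  have hg_le : ∀ s : ℝ, 0 < s → s ≤ 1 → g s = s ^ (a - b) := by
    intro s hs0 hs1
    rw [hg s hs0, hφ s, if_pos hs1, hsin0]
    ring_nf
  -- g equals exp (log s * PP s) on [1, ∞)
  have hg_ge : ∀ s : ℝ, 1 ≤ s → g s = Real.exp (Real.log s * PP a b ε s) := by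
    intro s hs
    have hs0 : (0:ℝ) < s := lt_of_lt_of_le one_pos hs
    rw [hg s hs0, hφ s]
    rcases eq_or_lt_of_le hs with h1 | h1
    · rw [if_pos (le_of_eq h1.symm)]
      rw [← h1, hsin0, Real.rpow_def_of_pos one_pos]
      unfold PP
      rw [ps_one]
      norm_num
    · rw [if_neg (not_le.mpr h1), sin_three_pi_div_two_add,
        Real.rpow_def_of_pos hs0]
      congr 1
      unfold PP ps LL vv
      ring
  -- derivative of g at 1 is a - b
  have hgd1 : HasDerivAt g (a - b) 1 := by
    have hF : HasDerivAt (fun s => Real.exp (Real.log s * PP a b ε s))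
        ((Real.exp (Real.log 1 * PP a b ε 1)) * ((1:ℝ)⁻¹ * PP a b ε 1 + Real.log 1 * PPd b ε 1)) 1 :=
      ((Real.hasDerivAt_log one_ne_zero).mul (hasDerivAt_PP a b ε 1)).exp
    have hF1 : HasDerivAt (fun s => Real.exp (Real.log s * PP a b ε s)) (a - b) 1 := by
      convert hF using 1
      unfold PP
      rw [ps_one, Real.log_one]
      norm_num
    have hright : HasDerivWithinAt g (a - b) (Set.Ici 1) 1 := by
      apply (hF1.hasDerivWithinAt).congr
      · intro s hs; exact hg_ge s hs
      · exact hg_ge 1 le_rfl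
    have hG : HasDerivAt (fun s : ℝ => s ^ (a - b)) (a - b) 1 := by
      have := Real.hasDerivAt_rpow_const (p := a - b) (Or.inl one_ne_zero)
      simpa using this
    have hleft : HasDerivWithinAt g (a - b) (Set.Iic 1) 1 := by
      apply (hG.hasDerivWithinAt).congr_of_eventuallyEq
      · have hpos : ∀ᶠ s in 𝓝[Set.Iic 1] (1:ℝ), (0:ℝ) < s :=
          (eventually_gt_nhds one_pos).filter_mono nhdsWithin_le_nhds
        filter_upwards [hpos, self_mem_nhdsWithin] with s hs0 hs1
        exact hg_le s hs0 hs1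
      · exact hg_le 1 one_pos le_rfl
    have := hleft.union hright
    rw [Set.Iic_union_Ici] at this
    exact this.hasDerivAt (by simp)
  -- deriv g on (0,1)
  have hderiv_lt : ∀ t : ℝ, 0 < t → t < 1 → deriv g t = (a - b) * t ^ (a - b - 1) := by
    intro t ht0 ht1
    have hev : g =ᶠ[𝓝 t] fun s => s ^ (a - b) := by
      have hmem : Set.Ioo (0:ℝ) 1 ∈ 𝓝 t := isOpen_Ioo.mem_nhds ⟨ht0, ht1⟩
      filter_upwards [hmem] with s hs
      exact hg_le s hs.1 hs.2.le
    have hR : HasDerivAt (fun s : ℝ => s ^ (a - b)) ((a - b) * t ^ (a - b - 1)) t :=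
      Real.hasDerivAt_rpow_const (Or.inl (ne_of_gt ht0))
    exact (hR.congr_of_eventuallyEq hev).deriv
  -- deriv g on (1,∞)
  have hderiv_gt : ∀ t : ℝ, 1 < t →
      deriv g t = Real.exp (Real.log t * PP a b ε t) * (t⁻¹ * PP a b ε t + Real.log t * PPd b ε t) := by
    intro t ht1
    have ht0 : (0:ℝ) < t := lt_trans one_pos ht1
    have hev : g =ᶠ[𝓝 t] fun s => Real.exp (Real.log s * PP a b ε s) := by
      have hmem : Set.Ioi (1:ℝ) ∈ 𝓝 t := isOpen_Ioi.mem_nhds ht1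
      filter_upwards [hmem] with s hs
      exact hg_ge s (le_of_lt hs)
    have hF : HasDerivAt (fun s => Real.exp (Real.log s * PP a b ε s))
        ((Real.exp (Real.log t * PP a b ε t)) * (t⁻¹ * PP a b ε t + Real.log t * PPd b ε t)) t :=
      ((Real.hasDerivAt_log (ne_of_gt ht0)).mul (hasDerivAt_PP a b ε t)).exp
    exact (hF.congr_of_eventuallyEq hev).deriv
  -- value identities
  have hval_le : ∀ t : ℝ, 0 < t → t ≤ 1 → deriv g t / t = (a - b) * t ^ (a - b - 2) := by
    intro t ht0 ht1
    rcases eq_or_lt_of_le ht1 with h1 | h1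
    · subst h1
      rw [hgd1.deriv]
      norm_num [Real.one_rpow]
    · have hee : t ^ (a - b - 2) = t ^ (a - b - 1) / t := by
        rw [show a - b - 2 = a - b - 1 - 1 by ring, Real.rpow_sub ht0, Real.rpow_one]
      rw [hderiv_lt t ht0 h1, hee, mul_div_assoc]
  have hval_ge : ∀ t : ℝ, 1 ≤ t → deriv g t / t = HH a b ε t := by
    intro t ht1
    rcases eq_or_lt_of_le ht1 with h1 | h1
    · rw [← h1]
      rw [hgd1.deriv]
      unfold HH QQ PP
      rw [ps_one, Real.log_one]
      norm_num
    · have ht0 : (0:ℝ) < t := lt_trans one_pos h1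
      rw [hderiv_gt t h1]
      unfold HH QQ
      rw [show (PP a b ε t - 2) * Real.log t = Real.log t * PP a b ε t - (Real.log t + Real.log t) by ring,
        Real.exp_sub, Real.exp_add, Real.exp_log ht0]
      field_simp
  -- rpow comparison on (0,1]
  have hrpow : ∀ x y : ℝ, 0 < x → x < y → y ≤ 1 →
      (a - b) * y ^ (a - b - 2) < (a - b) * x ^ (a - b - 2) := by
    intro x y hx hxy hy1
    have hy0 : 0 < y := lt_trans hx hxy
    have hc : a - b - 2 < 0 := by linarith
    have : y ^ (a - b - 2) < x ^ (a - b - 2) := by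
      rw [Real.rpow_def_of_pos hx, Real.rpow_def_of_pos hy0]
      apply Real.exp_lt_exp.mpr
      have := Real.log_lt_log hx hxy
      nlinarith
    nlinarith [this]
  have hHH := HH_strictAnti a b ε hb hab hab2 hε hε1 hεb1 hεb2
  intro x hx y hy hxy
  simp only [Set.mem_Ioi] at hx hy
  show deriv g y / y < deriv g x / x
  rcases le_or_gt y 1 with hy1 | hy1
  · rw [hval_le x hx (by linarith), hval_le y (by linarith) hy1]
    exact hrpow x y hx hxy hy1
  · rcases le_or_gt x 1 with hx1 | hx1
    · have hstep2 : deriv g y / y < deriv g 1 / 1 := by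
        rw [hval_ge 1 le_rfl, hval_ge y (by linarith)]
        exact hHH (Set.mem_Ici.mpr le_rfl) (Set.mem_Ici.mpr hy1.le) hy1
      rcases eq_or_lt_of_le hx1 with he | hlt
      · rw [he]
        exact hstep2
      · have hstep1 : deriv g 1 / 1 < deriv g x / x := by
          rw [hval_le x hx hx1, hval_le 1 one_pos le_rfl]
          simpa using hrpow x 1 hx hlt le_rfl
        exact lt_trans hstep2 hstep1
    · rw [hval_ge x hx1.le, hval_ge y (by linarith)]
      exact hHH hx1.le (by linarith : (1:ℝ) ≤ y) hxy
end
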